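/- arXiv:1210.5740 — 5 statements merged into one kernel-verified Lean document; each statement's English description precedes it below -/
import Mathlib

section
/- Let w ∈ S_n be an involution and α = ε_j − ε_i (j < i) a positive root of type A_{n−1}. Then the transposition s_α = (i, j) satisfies s_α ≤ w in the Bruhat order if and only if there exists a root ε_s − ε_r ∈ Supp(w) with s ≤ j and i ≤ r. -/
/-- The number of inversions of a permutation, i.e. its Coxeter length in type `A`. -/
def invCount {n : ℕ} (w : Equiv.Perm (Fin n)) : ℕ :=
  (Finset.univ.filter fun p : Fin n × Fin n => p.1 < p.2 ∧ w p.2 < w p.1).card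

/-- The Bruhat order on `Sₙ`. -/
def BruhatLE {n : ℕ} (v w : Equiv.Perm (Fin n)) : Prop :=
  Relation.ReflTransGen
    (fun x y => invCount x < invCount y ∧ ∃ i j : Fin n, y = x * Equiv.swap i j) v w

open Equiv Finset

section Aux

variable {n : ℕ}

lemma classify {x : Equiv.Perm (Fin n)} {p q a b : Fin n} (hpq : p < q) (hx : x p < x q)
    (hab : a < b) (hinv : x b < x a) (hnot : ¬ Equiv.swap p q a < Equiv.swap p q b) :
    (a = p ∧ b ≠ p ∧ b ≠ q ∧ b < q) ∨ (b = q ∧ a ≠ p ∧ a ≠ q ∧ p < a) := by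
  by_cases hap : a = p
  · have hbq : b ≠ q := by
      rintro rfl; rw [hap] at hinv; exact absurd hx (not_lt.2 hinv.le)
    have hbp : b ≠ p := by rintro rfl; exact absurd (hap ▸ hab) (lt_irrefl _)
    left
    refine ⟨hap, hbp, hbq, ?_⟩
    rw [hap, Equiv.swap_apply_left, Equiv.swap_apply_of_ne_of_ne hbp hbq] at hnot
    exact lt_of_le_of_ne (not_lt.1 hnot) hbq
  · by_cases haq : a = q
    · exfalso
      have hbp : b ≠ p := fun h => absurd (haq ▸ h ▸ hab) (not_lt.2 hpq.le)
      have hbq : b ≠ q := by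
        intro h; rw [haq, h] at hab; exact lt_irrefl _ hab
      rw [haq, Equiv.swap_apply_right, Equiv.swap_apply_of_ne_of_ne hbp hbq] at hnot
      exact hnot (hpq.trans (haq ▸ hab))
    · by_cases hbp : b = p
      · exfalso
        rw [Equiv.swap_apply_of_ne_of_ne hap haq, hbp, Equiv.swap_apply_left] at hnot
        exact hnot ((hbp ▸ hab).trans hpq)
      · by_cases hbq : b = q
        · right
          rw [Equiv.swap_apply_of_ne_of_ne hap haq, hbq, Equiv.swap_apply_right] at hnot
          exact ⟨hbq, hap, haq, lt_of_le_of_ne (not_lt.1 hnot) (Ne.symm hap)⟩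
        · exfalso
          rw [Equiv.swap_apply_of_ne_of_ne hap haq,
            Equiv.swap_apply_of_ne_of_ne hbp hbq] at hnot
          exact hnot hab

lemma invCount_lt_mul_swap (x : Equiv.Perm (Fin n)) {p q : Fin n}
    (hpq : p < q) (h : x p < x q) :
    invCount x < invCount (x * Equiv.swap p q) := by
  classical
  set t := Equiv.swap p q with ht
  set y := x * t with hy
  have hyapp : ∀ a, y a = x (t a) := fun a => rfl
  have htt : ∀ a, t (t a) = a := fun a => Equiv.swap_apply_self p q a
  have hytp : ∀ a, y (t a) = x a := fun a => by rw [hyapp, htt]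
  set S := Finset.univ.filter
    (fun ab : Fin n × Fin n => ab.1 < ab.2 ∧ x ab.2 < x ab.1) with hS
  set T := Finset.univ.filter
    (fun ab : Fin n × Fin n => ab.1 < ab.2 ∧ y ab.2 < y ab.1) with hT
  have hypx : y p = x q := by rw [hyapp]; rw [ht, Equiv.swap_apply_left]
  have hyqx : y q = x p := by rw [hyapp]; rw [ht, Equiv.swap_apply_right]
  have memS : ∀ a b : Fin n, (a, b) ∈ S ↔ a < b ∧ x b < x a := by
    intro a b; simp [hS]
  have memT : ∀ a b : Fin n, (a, b) ∈ T ↔ a < b ∧ y b < y a := by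
    intro a b; simp [hT]
  have hpqT : (p, q) ∈ T := (memT p q).2 ⟨hpq, by rw [hypx, hyqx]; exact h⟩
  set φ : Fin n × Fin n → Fin n × Fin n := fun ab =>
    if t ab.1 < t ab.2 then (t ab.1, t ab.2) else ab with hφ
  have phiA : ∀ a b : Fin n, t a < t b → φ (a, b) = (t a, t b) := by
    intro a b hab; simp only [hφ]; rw [if_pos hab]
  have phiB : ∀ a b : Fin n, ¬ t a < t b → φ (a, b) = (a, b) := by
    intro a b hab; simp only [hφ]; rw [if_neg hab]
  have hmaps : ∀ ab ∈ S, φ ab ∈ T.erase (p, q) := by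
    rintro ⟨a, b⟩ hab
    rw [memS] at hab
    obtain ⟨h1, h2⟩ := hab
    rw [Finset.mem_erase]
    by_cases hc : t a < t b
    · rw [phiA a b hc]
      constructor
      · intro hcontra
        rw [Prod.mk.injEq] at hcontra
        have ha : a = q := by
          have := congrArg t hcontra.1
          rwa [htt, ht, Equiv.swap_apply_left] at this
        have hb : b = p := by
          have := congrArg t hcontra.2
          rwa [htt, ht, Equiv.swap_apply_right] at this
        rw [ha, hb] at h1
        exact absurd (hpq.trans h1) (lt_irrefl _)
      · rw [memT, hytp, hytp]
        exact ⟨hc, h2⟩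
    · rw [phiB a b hc]
      rcases classify hpq h h1 h2 hc with ⟨hap, hbp, hbq, hblt⟩ | ⟨hbq, hap, haq, hpa⟩
      · constructor
        · intro hcontra
          rw [Prod.mk.injEq] at hcontra
          exact hbq hcontra.2
        · rw [memT]
          refine ⟨h1, ?_⟩
          have hya : y a = x q := by rw [hap, hypx]
          have hyb : y b = x b := by
            rw [hyapp, ht, Equiv.swap_apply_of_ne_of_ne hbp hbq]
          rw [hya, hyb]
          rw [hap] at h2
          exact h2.trans h
      · constructor
        · intro hcontra
          rw [Prod.mk.injEq] at hcontra
          exact hap hcontra.1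
        · rw [memT]
          refine ⟨h1, ?_⟩
          have hyb : y b = x p := by rw [hbq, hyqx]
          have hya : y a = x a := by
            rw [hyapp, ht, Equiv.swap_apply_of_ne_of_ne hap haq]
          rw [hya, hyb]
          rw [hbq] at h2
          exact h.trans h2
  have hinj : Set.InjOn φ ↑S := by
    rintro ⟨a, b⟩ ha ⟨c, d⟩ hc heq
    rw [Finset.mem_coe, memS] at ha hc
    obtain ⟨ha1, ha2⟩ := ha
    obtain ⟨hc1, hc2⟩ := hc
    by_cases e1 : t a < t b <;> by_cases e2 : t c < t d
    · rw [phiA a b e1, phiA c d e2, Prod.mk.injEq] at heq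
      exact Prod.ext (t.injective heq.1) (t.injective heq.2)
    · exfalso
      rw [phiA a b e1, phiB c d e2, Prod.mk.injEq] at heq
      rcases classify hpq h hc1 hc2 e2 with ⟨hcp, hdp, hdq, hdlt⟩ | ⟨hdq, hcp, hcq, hpc⟩
      · -- t a = c = p, t b = d : then a = q, so b > q, t b = b = d < q contra
        have ha' : a = q := by
          have := congrArg t heq.1
          rwa [htt, hcp, ht, Equiv.swap_apply_left] at this
        have hqb : q < b := ha' ▸ ha1
        have hbB : t b = b := by
          rw [ht]; apply Equiv.swap_apply_of_ne_of_ne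
          · intro hh; rw [hh] at hqb; exact absurd hqb (not_lt.2 hpq.le)
          · intro hh; rw [hh] at hqb; exact lt_irrefl _ hqb
        rw [hbB] at heq
        rw [heq.2] at hqb
        exact absurd (hdlt.trans hqb) (lt_irrefl _)
      · -- t b = d = q ⟹ b = p; a < p; t a = a = c > p contra
        have hb' : b = p := by
          have := congrArg t heq.2
          rwa [htt, hdq, ht, Equiv.swap_apply_right] at this
        have hap' : a < p := hb' ▸ ha1
        have haA : t a = a := by
          rw [ht]; apply Equiv.swap_apply_of_ne_of_ne hap'.ne
          intro hh; rw [hh] at hap'; exact absurd hap' (not_lt.2 hpq.le)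
        rw [haA] at heq
        rw [heq.1] at hap'
        exact absurd (hpc.trans hap') (lt_irrefl _)
    · exfalso
      rw [phiB a b e1, phiA c d e2, Prod.mk.injEq] at heq
      rcases classify hpq h ha1 ha2 e1 with ⟨hap, hbp, hbq, hblt⟩ | ⟨hbq, hap, haq, hpa⟩
      · have hc' : c = q := by
          have := congrArg t heq.1.symm
          rwa [htt, hap, ht, Equiv.swap_apply_left] at this
        have hqd : q < d := hc' ▸ hc1
        have hdB : t d = d := by
          rw [ht]; apply Equiv.swap_apply_of_ne_of_ne
          · intro hh; rw [hh] at hqd; exact absurd hqd (not_lt.2 hpq.le)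
          · intro hh; rw [hh] at hqd; exact lt_irrefl _ hqd
        rw [hdB] at heq
        rw [← heq.2] at hqd
        exact absurd (hblt.trans hqd) (lt_irrefl _)
      · have hd' : d = p := by
          have := congrArg t heq.2.symm
          rwa [htt, hbq, ht, Equiv.swap_apply_right] at this
        have hcp' : c < p := hd' ▸ hc1
        have hcA : t c = c := by
          rw [ht]; apply Equiv.swap_apply_of_ne_of_ne hcp'.ne
          intro hh; rw [hh] at hcp'; exact absurd hcp' (not_lt.2 hpq.le)
        rw [hcA] at heq
        rw [← heq.1] at hcp'
        exact absurd (hpa.trans hcp') (lt_irrefl _)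
    · rw [phiB a b e1, phiB c d e2] at heq
      exact heq
  have hcard : S.card ≤ (T.erase (p, q)).card :=
    Finset.card_le_card_of_injOn φ hmaps hinj
  have hlt : (T.erase (p, q)).card < T.card := Finset.card_erase_lt_of_mem hpqT
  calc invCount x = S.card := rfl
    _ ≤ (T.erase (p, q)).card := hcard
    _ < T.card := hlt
    _ = invCount (x * Equiv.swap p q) := rfl

lemma bruhat_step (x : Equiv.Perm (Fin n)) {p q : Fin n} (hpq : p < q) (h : x p < x q) :
    BruhatLE x (x * Equiv.swap p q) :=
  Relation.ReflTransGen.single ⟨invCount_lt_mul_swap x hpq h, p, q, rfl⟩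

lemma lt_apply_of_step (x : Equiv.Perm (Fin n)) {p q : Fin n} (hpq : p < q)
    (hlt : invCount x < invCount (x * Equiv.swap p q)) : x p < x q := by
  by_contra hcon
  have hne : x q ≠ x p := fun h => absurd (x.injective h) hpq.ne'
  have h2 : x q < x p := lt_of_le_of_ne (not_lt.1 hcon) hne
  have hyx : (x * Equiv.swap p q) * Equiv.swap p q = x := by
    rw [mul_assoc, Equiv.swap_mul_self, mul_one]
  have hyp : (x * Equiv.swap p q) p = x q := by
    rw [Equiv.Perm.mul_apply, Equiv.swap_apply_left]
  have hyq : (x * Equiv.swap p q) q = x p := by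
    rw [Equiv.Perm.mul_apply, Equiv.swap_apply_right]
  have := invCount_lt_mul_swap (x * Equiv.swap p q) hpq (by rw [hyp, hyq]; exact h2)
  rw [hyx] at this
  omega

lemma bruhat_mul_disjoint_involution :
    ∀ k : ℕ, ∀ v x : Equiv.Perm (Fin n),
      (Finset.univ.filter fun c => v c ≠ c).card ≤ k → v * v = 1 →
      (∀ a, v a ≠ a → x a = a) → BruhatLE x (x * v) := by
  intro k
  induction k with
  | zero =>
    intro v x hcard hv hfix
    have hv1 : v = 1 := by
      apply Equiv.ext
      intro c
      simp only [Equiv.Perm.one_apply]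
      by_contra hc
      have hmem : c ∈ Finset.univ.filter fun c => v c ≠ c := by
        simp only [Finset.mem_filter, Finset.mem_univ, true_and]
        simpa using hc
      have := Finset.card_pos.2 ⟨c, hmem⟩
      omega
    rw [hv1, mul_one]
    exact Relation.ReflTransGen.refl
  | succ k ih =>
    intro v x hcard hv hfix
    by_cases h1 : v = 1
    · rw [h1, mul_one]
      exact Relation.ReflTransGen.refl
    · have hex : ∃ a, v a ≠ a := by
        by_contra hno
        push_neg at hno
        exact h1 (Equiv.ext hno)
      obtain ⟨a, ha⟩ := hex
      have hvv : ∀ c, v (v c) = c := by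
        intro c
        rw [← Equiv.Perm.mul_apply, hv, Equiv.Perm.one_apply]
      have hab : a ≠ v a := fun h => ha h.symm
      obtain ⟨p, q, hplt, hvp, hvq⟩ : ∃ p q : Fin n, p < q ∧ v p = q ∧ v q = p := by
        rcases lt_or_gt_of_ne hab with h | h
        · exact ⟨a, v a, h, rfl, hvv a⟩
        · exact ⟨v a, a, h, hvv a, rfl⟩
      have hxp : x p = p := hfix p (by rw [hvp]; exact hplt.ne')
      have hxq : x q = q := hfix q (by rw [hvq]; exact hplt.ne)
      have step1 : BruhatLE x (x * Equiv.swap p q) :=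
        bruhat_step x hplt (by rw [hxp, hxq]; exact hplt)
      have hvinv : v⁻¹ = v := inv_eq_of_mul_eq_one_right hv
      have hconj : Equiv.swap p q = v * Equiv.swap p q * v⁻¹ := by
        have := Equiv.swap_apply_apply v p q
        rwa [hvp, hvq, Equiv.swap_comm] at this
      have hcomm : Equiv.swap p q * v = v * Equiv.swap p q := by
        calc Equiv.swap p q * v = (v * Equiv.swap p q * v⁻¹) * v := by rw [← hconj]
          _ = v * Equiv.swap p q := inv_mul_cancel_right _ v
      have hv' : (Equiv.swap p q * v) * (Equiv.swap p q * v) = 1 := by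
        calc Equiv.swap p q * v * (Equiv.swap p q * v)
            = Equiv.swap p q * (v * Equiv.swap p q) * v := by group
          _ = Equiv.swap p q * (Equiv.swap p q * v) * v := by rw [hcomm]
          _ = (Equiv.swap p q * Equiv.swap p q) * (v * v) := by group
          _ = 1 := by rw [Equiv.swap_mul_self, hv, one_mul]
      have hv'p : (Equiv.swap p q * v) p = p := by
        show Equiv.swap p q (v p) = p
        rw [hvp, Equiv.swap_apply_right]
      have hv'q : (Equiv.swap p q * v) q = q := by
        show Equiv.swap p q (v q) = q
        rw [hvq, Equiv.swap_apply_left]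
      have hfix' : ∀ c, (Equiv.swap p q * v) c ≠ c → (x * Equiv.swap p q) c = c := by
        intro c hc
        have hcp : c ≠ p := fun h => hc (h ▸ hv'p)
        have hcq : c ≠ q := fun h => hc (h ▸ hv'q)
        have hvc : v c ≠ c := by
          intro h
          apply hc
          show Equiv.swap p q (v c) = c
          rw [h, Equiv.swap_apply_of_ne_of_ne hcp hcq]
        have : x c = c := hfix c hvc
        calc (x * Equiv.swap p q) c = x (Equiv.swap p q c) := rfl
          _ = x c := by rw [Equiv.swap_apply_of_ne_of_ne hcp hcq]
          _ = c := this
      have hsub : (Finset.univ.filter fun c => (Equiv.swap p q * v) c ≠ c) ⊆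
          (Finset.univ.filter fun c => v c ≠ c).erase p := by
        intro c hc
        simp only [Finset.mem_filter, Finset.mem_univ, true_and] at hc
        have hcp : c ≠ p := fun h => hc (h ▸ hv'p)
        have hcq : c ≠ q := fun h => hc (h ▸ hv'q)
        have hvc : v c ≠ c := by
          intro h
          apply hc
          show Equiv.swap p q (v c) = c
          rw [h, Equiv.swap_apply_of_ne_of_ne hcp hcq]
        rw [Finset.mem_erase]
        exact ⟨hcp, by simp only [Finset.mem_filter, Finset.mem_univ, true_and]; exact hvc⟩
      have hpmem : p ∈ Finset.univ.filter fun c => v c ≠ c := by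
        simp only [Finset.mem_filter, Finset.mem_univ, true_and]
        rw [hvp]; exact hplt.ne'
      have hcard' : (Finset.univ.filter fun c => (Equiv.swap p q * v) c ≠ c).card ≤ k := by
        have h1' := Finset.card_le_card hsub
        have h2' := Finset.card_erase_of_mem hpmem
        have h3' := Finset.card_pos.2 ⟨p, hpmem⟩
        omega
      have step2 : BruhatLE (x * Equiv.swap p q) ((x * Equiv.swap p q) * (Equiv.swap p q * v)) :=
        ih (Equiv.swap p q * v) (x * Equiv.swap p q) hcard' hv' hfix'
      have hfinal : (x * Equiv.swap p q) * (Equiv.swap p q * v) = x * v := by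
        rw [mul_assoc, ← mul_assoc (Equiv.swap p q), Equiv.swap_mul_self, one_mul]
      rw [hfinal] at step2
      exact Relation.ReflTransGen.trans step1 step2

lemma subA {s j i : Fin n} (h1 : s < j) (h2 : j < i) :
    BruhatLE (Equiv.swap i j) (Equiv.swap i s) := by
  have hsi : s < i := h1.trans h2
  have hfs : Equiv.swap i j s = s :=
    Equiv.swap_apply_of_ne_of_ne hsi.ne h1.ne
  have step1 : BruhatLE (Equiv.swap i j) (Equiv.swap i j * Equiv.swap s j) := by
    apply bruhat_step _ h1
    rw [hfs, Equiv.swap_apply_right]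
    exact hsi
  have hx1j : (Equiv.swap i j * Equiv.swap s j) j = s := by
    rw [Equiv.Perm.mul_apply, Equiv.swap_apply_right, hfs]
  have hx1i : (Equiv.swap i j * Equiv.swap s j) i = j := by
    rw [Equiv.Perm.mul_apply, Equiv.swap_apply_of_ne_of_ne hsi.ne' h2.ne',
      Equiv.swap_apply_left]
  have step2 : BruhatLE (Equiv.swap i j * Equiv.swap s j)
      (Equiv.swap i j * Equiv.swap s j * Equiv.swap j i) := by
    apply bruhat_step _ h2
    rw [hx1j, hx1i]
    exact h1
  have hfin : Equiv.swap i j * Equiv.swap s j * Equiv.swap j i = Equiv.swap i s := by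
    have hconj := Equiv.swap_apply_apply (Equiv.swap i j) s j
    rw [hfs, Equiv.swap_apply_right] at hconj
    rw [Equiv.swap_inv] at hconj
    rw [Equiv.swap_comm j i, ← hconj, Equiv.swap_comm]
  rw [hfin] at step2
  exact Relation.ReflTransGen.trans step1 step2

lemma subB {s i r : Fin n} (h1 : s < i) (h2 : i < r) :
    BruhatLE (Equiv.swap i s) (Equiv.swap r s) := by
  have hsr : s < r := h1.trans h2
  have hfr : Equiv.swap i s r = r :=
    Equiv.swap_apply_of_ne_of_ne h2.ne' hsr.ne'
  have step1 : BruhatLE (Equiv.swap i s) (Equiv.swap i s * Equiv.swap i r) := by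
    apply bruhat_step _ h2
    rw [Equiv.swap_apply_left, hfr]
    exact hsr
  have hx1s : (Equiv.swap i s * Equiv.swap i r) s = i := by
    rw [Equiv.Perm.mul_apply, Equiv.swap_apply_of_ne_of_ne h1.ne hsr.ne,
      Equiv.swap_apply_right]
  have hx1i : (Equiv.swap i s * Equiv.swap i r) i = r := by
    rw [Equiv.Perm.mul_apply, Equiv.swap_apply_left, hfr]
  have step2 : BruhatLE (Equiv.swap i s * Equiv.swap i r)
      (Equiv.swap i s * Equiv.swap i r * Equiv.swap s i) := by
    apply bruhat_step _ h1
    rw [hx1s, hx1i]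
    exact h2
  have hfin : Equiv.swap i s * Equiv.swap i r * Equiv.swap s i = Equiv.swap r s := by
    have hconj := Equiv.swap_apply_apply (Equiv.swap i s) i r
    rw [hfr, Equiv.swap_apply_left] at hconj
    rw [Equiv.swap_inv] at hconj
    rw [Equiv.swap_comm s i, ← hconj, Equiv.swap_comm]
  rw [hfin] at step2
  exact Relation.ReflTransGen.trans step1 step2

lemma swap_le_swap {i j r s : Fin n} (hsj : s ≤ j) (hji : j < i) (hir : i ≤ r) :
    BruhatLE (Equiv.swap i j) (Equiv.swap r s) := by
  have mid : BruhatLE (Equiv.swap i j) (Equiv.swap i s) := by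
    rcases eq_or_lt_of_le hsj with he | hlt
    · rw [he]; exact Relation.ReflTransGen.refl
    · exact subA hlt hji
  have mid2 : BruhatLE (Equiv.swap i s) (Equiv.swap r s) := by
    rcases eq_or_lt_of_le hir with he | hlt
    · rw [← he]; exact Relation.ReflTransGen.refl
    · exact subB (lt_of_le_of_lt hsj hji) hlt
  exact Relation.ReflTransGen.trans mid mid2

end Aux

/-- for an involution `w ∈ Sₙ` and a positive root `α = ε_j − ε_i` (`j < i`),
the reflection `s_α = (i, j)` satisfies `s_α ≤ w` in the Bruhat order iff there is a root
`ε_s − ε_r` in the support of `w` (i.e. `s < r` and `w(r) = s`) with `s ≤ j` and `i ≤ r`. -/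
theorem reflection_le_involution_iff
    (n : ℕ) (w : Equiv.Perm (Fin n)) (hw : w ^ 2 = 1)
    (i j : Fin n) (hji : j < i) :
    BruhatLE (Equiv.swap i j) w ↔ ∃ r s : Fin n, s < r ∧ w r = s ∧ s ≤ j ∧ i ≤ r := by
  have hww : w * w = 1 := by rwa [pow_two] at hw
  have hwinv : ∀ a, w (w a) = a := by
    intro a
    rw [← Equiv.Perm.mul_apply, hww, Equiv.Perm.one_apply]
  constructor
  · intro hle
    have key : ∀ z : Equiv.Perm (Fin n), BruhatLE (Equiv.swap i j) z →
        ∃ a, a ≤ j ∧ i ≤ z a := by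
      intro z hz
      induction hz with
      | refl => exact ⟨j, le_refl j, by rw [Equiv.swap_apply_right]⟩
      | @tail b c hxb hstep ih =>
        obtain ⟨a, haj, hia⟩ := ih
        obtain ⟨hcount, p, q, rfl⟩ := hstep
        have main : ∀ p q : Fin n, p < q →
            invCount b < invCount (b * Equiv.swap p q) →
            ∃ a', a' ≤ j ∧ i ≤ (b * Equiv.swap p q) a' := by
          intro p q hplt hcnt
          have hbpq : b p < b q := lt_apply_of_step b hplt hcnt
          by_cases hap : a = p
          · refine ⟨p, hap ▸ haj, ?_⟩
            rw [Equiv.Perm.mul_apply, Equiv.swap_apply_left]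
            rw [hap] at hia
            exact le_of_lt (lt_of_le_of_lt hia hbpq)
          · by_cases haq : a = q
            · refine ⟨p, le_of_lt (lt_of_lt_of_le hplt (haq ▸ haj)), ?_⟩
              rw [Equiv.Perm.mul_apply, Equiv.swap_apply_left]
              rw [haq] at hia
              exact hia
            · refine ⟨a, haj, ?_⟩
              rw [Equiv.Perm.mul_apply, Equiv.swap_apply_of_ne_of_ne hap haq]
              exact hia
        rcases lt_trichotomy p q with h | h | h
        · exact main p q h hcount
        · exfalso
          have hq1 : Equiv.swap p q = 1 := by rw [h]; exact Equiv.swap_self q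
          rw [hq1, mul_one] at hcount
          exact lt_irrefl _ hcount
        · rw [Equiv.swap_comm] at hcount ⊢
          exact main q p h hcount
    obtain ⟨a, haj, hia⟩ := key w hle
    refine ⟨w a, a, lt_of_le_of_lt haj (lt_of_lt_of_le hji hia), hwinv a, haj, hia⟩
  · rintro ⟨r, s, hsr, hwr, hsj, hir⟩
    have hws : w s = r := by rw [← hwr, hwinv]
    have h1 : BruhatLE (Equiv.swap i j) (Equiv.swap r s) := swap_le_swap hsj hji hir
    have h2 : BruhatLE (Equiv.swap r s) w := by
      have hwinv' : w⁻¹ = w := inv_eq_of_mul_eq_one_right hww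
      have hconj : Equiv.swap r s = w * Equiv.swap r s * w⁻¹ := by
        have := Equiv.swap_apply_apply w r s
        rwa [hwr, hws, Equiv.swap_comm] at this
      have hcomm : Equiv.swap r s * w = w * Equiv.swap r s := by
        calc Equiv.swap r s * w = (w * Equiv.swap r s * w⁻¹) * w := by rw [← hconj]
          _ = w * Equiv.swap r s := inv_mul_cancel_right _ w
      have hv2 : (Equiv.swap r s * w) * (Equiv.swap r s * w) = 1 := by
        calc Equiv.swap r s * w * (Equiv.swap r s * w)
            = Equiv.swap r s * (w * Equiv.swap r s) * w := by group
          _ = Equiv.swap r s * (Equiv.swap r s * w) * w := by rw [hcomm]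
          _ = (Equiv.swap r s * Equiv.swap r s) * (w * w) := by group
          _ = 1 := by rw [Equiv.swap_mul_self, hww, one_mul]
      have hvr : (Equiv.swap r s * w) r = r := by
        show Equiv.swap r s (w r) = r
        rw [hwr, Equiv.swap_apply_right]
      have hvs : (Equiv.swap r s * w) s = s := by
        show Equiv.swap r s (w s) = s
        rw [hws, Equiv.swap_apply_left]
      have hfix : ∀ a, (Equiv.swap r s * w) a ≠ a → Equiv.swap r s a = a := by
        intro a hva
        apply Equiv.swap_apply_of_ne_of_ne
        · rintro rfl; exact hva hvr
        · rintro rfl; exact hva hvs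
      have := bruhat_mul_disjoint_involution
        (Finset.univ.filter fun c => (Equiv.swap r s * w) c ≠ c).card
        (Equiv.swap r s * w) (Equiv.swap r s) le_rfl hv2 hfix
      have heq : Equiv.swap r s * (Equiv.swap r s * w) = w := by
        rw [← mul_assoc, Equiv.swap_mul_self, one_mul]
      rwa [heq] at this
    exact Relation.ReflTransGen.trans h1 h2
end

section
/- Let w ∈ S_n be an involution with w(1) = j ≥ 3, u = s_{j−1}⋯s₁, v = u⁻¹w, and g₀ = s_{j−1}⋯s₂. Then v⁻¹ ≥ g₀ in the Bruhat order on S_n. -/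
/-- value of a swap, on `Fin.val` level -/
lemma swap_val {n : ℕ} (a b x : Fin n) :
    ((Equiv.swap a b) x).1 = if x.1 = a.1 then b.1 else if x.1 = b.1 then a.1 else x.1 := by
  rcases eq_or_ne x a with rfl | hxa
  · simp
  · rcases eq_or_ne x b with rfl | hxb
    · simp [Fin.val_ne_of_ne hxa, Equiv.swap_apply_right]
    · rw [Equiv.swap_apply_of_ne_of_ne hxa hxb,
        if_neg (Fin.val_ne_of_ne hxa), if_neg (Fin.val_ne_of_ne hxb)]

def cyc (n s t : ℕ) (h : s + t < n) : Equiv.Perm (Fin n) :=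
  ((List.finRange t).reverse.map fun m =>
    Equiv.swap (⟨m.1 + s, by have := m.isLt; omega⟩ : Fin n)
               (⟨m.1 + s + 1, by have := m.isLt; omega⟩ : Fin n)).prod

lemma cyc_succ (n s t : ℕ) (h : s + (t + 1) < n) :
    cyc n s (t + 1) h =
      Equiv.swap (⟨s + t, by omega⟩ : Fin n) (⟨s + t + 1, by omega⟩ : Fin n) *
        cyc n s t (by omega) := by
  unfold cyc
  rw [List.finRange_succ_last, List.reverse_append]
  simp only [List.map_reverse, List.map_map, List.reverse_cons, List.map_cons,
    List.reverse_nil, List.nil_append, List.map_nil, List.prod_cons, ← List.map_reverse]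
  rw [List.map_append, List.prod_append, List.map_map, List.map_cons, List.map_nil,
    List.prod_cons, List.prod_nil, mul_one]
  congr 2 <;> exact Fin.ext (by simp [Nat.add_comm])

lemma cyc_apply (n s : ℕ) : ∀ (t : ℕ) (h : s + t < n) (x : Fin n),
    ((cyc n s t h) x).1 =
      if x.1 = s ∧ 0 < t then s + t
      else if s < x.1 ∧ x.1 ≤ s + t then x.1 - 1 else x.1 := by
  intro t
  induction t with
  | zero =>
    intro h x
    simp only [cyc, List.finRange_zero, List.reverse_nil, List.map_nil, List.prod_nil,
      Equiv.Perm.one_apply]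
    split_ifs <;> omega
  | succ t ih =>
    intro h x
    rw [cyc_succ, Equiv.Perm.mul_apply]
    have hv := swap_val (⟨s + t, by omega⟩ : Fin n) (⟨s + t + 1, by omega⟩ : Fin n)
      (cyc n s t (by omega) x)
    simp only [Fin.val_mk] at hv
    rw [hv, ih (by omega) x]
    have := x.2
    split_ifs <;> omega

lemma invCount_swap_lt {n : ℕ} (π : Equiv.Perm (Fin n)) (a b : Fin n)
    (hab : a.1 + 1 = b.1) (hd : π b < π a) :
    invCount (π * Equiv.swap a b) < invCount π := by
  classical
  have haltb : a < b := by rw [Fin.lt_def]; omega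
  set S := Finset.univ.filter
    (fun p : Fin n × Fin n => p.1 < p.2 ∧ π p.2 < π p.1) with hS
  set S' := Finset.univ.filter
    (fun p : Fin n × Fin n => p.1 < p.2 ∧ (π * Equiv.swap a b) p.2 < (π * Equiv.swap a b) p.1)
    with hS'
  have hmem : (a, b) ∈ S := by
    simp only [hS, Finset.mem_filter, Finset.mem_univ, true_and]
    exact ⟨haltb, hd⟩
  have himg : ∀ p ∈ S', (Equiv.swap a b p.1, Equiv.swap a b p.2) ∈ S.erase (a, b) := by
    intro p hp
    simp only [hS', Finset.mem_filter, Finset.mem_univ, true_and, Equiv.Perm.mul_apply] at hp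
    obtain ⟨hlt, hinv⟩ : p.1 < p.2 ∧ π (Equiv.swap a b p.2) < π (Equiv.swap a b p.1) :=
      (Finset.mem_filter.1 hp).2
    have hpne : ¬(p.1 = a ∧ p.2 = b) := by
      rintro ⟨h1, h2⟩
      rw [h1, h2, Equiv.swap_apply_left, Equiv.swap_apply_right] at hinv
      exact absurd hinv (not_lt.2 (le_of_lt hd))
    have hltv : p.1.1 < p.2.1 := hlt
    have hord : Equiv.swap a b p.1 < Equiv.swap a b p.2 := by
      rw [Fin.lt_def, swap_val, swap_val]
      have : ¬(p.1.1 = a.1 ∧ p.2.1 = b.1) := by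
        intro hc
        exact hpne ⟨Fin.ext hc.1, Fin.ext hc.2⟩
      split_ifs <;> omega
    refine Finset.mem_erase.2 ⟨?_, ?_⟩
    · intro hc
      have h1 : Equiv.swap a b p.1 = a := congrArg Prod.fst hc
      have h2 : Equiv.swap a b p.2 = b := congrArg Prod.snd hc
      have : p.1 = b := by
        have := congrArg (Equiv.swap a b) h1
        rwa [Equiv.swap_apply_self, Equiv.swap_apply_left] at this
      have h2' : p.2 = a := by
        have := congrArg (Equiv.swap a b) h2
        rwa [Equiv.swap_apply_self, Equiv.swap_apply_right] at this
      rw [this, h2'] at hlt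
      exact absurd hlt (not_lt.2 (le_of_lt haltb))
    · simp only [hS, Finset.mem_filter, Finset.mem_univ, true_and]
      exact ⟨hord, hinv⟩
  have hcard : S'.card ≤ (S.erase (a, b)).card := by
    apply Finset.card_le_card_of_injOn _ himg
    intro p _ q _ hpq
    have h1 : Equiv.swap a b p.1 = Equiv.swap a b q.1 := congrArg Prod.fst hpq
    have h2 : Equiv.swap a b p.2 = Equiv.swap a b q.2 := congrArg Prod.snd hpq
    exact Prod.ext ((Equiv.swap a b).injective h1) ((Equiv.swap a b).injective h2)
  calc invCount (π * Equiv.swap a b) = S'.card := rfl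
    _ ≤ (S.erase (a, b)).card := hcard
    _ < S.card := Finset.card_erase_lt_of_mem hmem

lemma myStrictMono_of_lt_succ {k : ℕ} {α : Type*} [Preorder α] (f : Fin k → α)
    (h : ∀ (i : ℕ) (h1 : i + 1 < k), f ⟨i, by omega⟩ < f ⟨i + 1, h1⟩) : StrictMono f := by
  rintro ⟨x, hx⟩ ⟨y, hy⟩ hxy
  have hxy' : x < y := hxy
  have key : ∀ d (b : ℕ) (hB : b < k), b = x + d + 1 → f ⟨x, hx⟩ < f ⟨b, hB⟩ := by
    intro d
    induction d with
    | zero =>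
      intro b hB hb
      subst hb
      exact h x hB
    | succ d ihd =>
      intro b hB hb
      subst hb
      exact lt_trans (ihd (x + d + 1) (by omega) rfl) (h (x + d + 1) hB)
  have := key (y - x - 1) y hy (by omega)
  exact this


lemma perm_eq_of_tail_mono {n : ℕ} (hn : 2 ≤ n) (π ρ : Equiv.Perm (Fin n))
    (h0 : π ⟨0, by omega⟩ = ρ ⟨0, by omega⟩) (h1 : π ⟨1, by omega⟩ = ρ ⟨1, by omega⟩)
    (hπ : StrictMono (fun i : Fin (n - 2) => π ⟨i.1 + 2, by omega⟩))
    (hρ : StrictMono (fun i : Fin (n - 2) => ρ ⟨i.1 + 2, by omega⟩)) : π = ρ := by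
  classical
  have hne : π ⟨0, by omega⟩ ≠ π ⟨1, by omega⟩ := by
    intro hc
    simpa [Fin.ext_iff] using π.injective hc
  have hcard : (Finset.univ \ {π ⟨0, by omega⟩, π ⟨1, by omega⟩} : Finset (Fin n)).card = n - 2 := by
    rw [Finset.card_sdiff_of_subset (Finset.subset_univ _), Finset.card_univ, Fintype.card_fin,
      Finset.card_pair hne]
  have hmemπ : ∀ i : Fin (n - 2),
      π ⟨i.1 + 2, by omega⟩ ∈ (Finset.univ \ {π ⟨0, by omega⟩, π ⟨1, by omega⟩} : Finset (Fin n)) := by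
    intro i
    simp only [Finset.mem_sdiff, Finset.mem_univ, true_and, Finset.mem_insert,
      Finset.mem_singleton]
    push_neg
    constructor <;>
      · intro hc; simpa [Fin.ext_iff] using π.injective hc
  have hmemρ : ∀ i : Fin (n - 2),
      ρ ⟨i.1 + 2, by omega⟩ ∈ (Finset.univ \ {π ⟨0, by omega⟩, π ⟨1, by omega⟩} : Finset (Fin n)) := by
    intro i
    simp only [Finset.mem_sdiff, Finset.mem_univ, true_and, Finset.mem_insert,
      Finset.mem_singleton]
    push_neg
    refine ⟨fun hc => ?_, fun hc => ?_⟩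
    · simpa [Fin.ext_iff] using ρ.injective (hc.trans h0)
    · simpa [Fin.ext_iff] using ρ.injective (hc.trans h1)
  have eπ := Finset.orderEmbOfFin_unique hcard (fun i => hmemπ i) hπ
  have eρ := Finset.orderEmbOfFin_unique hcard (fun i => hmemρ i) hρ
  have htail : ∀ i : Fin (n - 2),
      π ⟨i.1 + 2, by have := i.2; omega⟩ = ρ ⟨i.1 + 2, by have := i.2; omega⟩ :=
    fun i => (congrFun eπ i).trans (congrFun eρ i).symm
  clear eπ eρ hmemπ hmemρ hπ hρ hcard hne
  apply Equiv.ext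
  intro x
  rcases Nat.lt_or_ge x.1 2 with h2 | h2
  · have hx01 : x = (⟨0, by omega⟩ : Fin n) ∨ x = (⟨1, by omega⟩ : Fin n) := by
      rcases Nat.lt_or_ge x.1 1 with h1' | h1'
      · exact Or.inl (Fin.ext (show x.1 = 0 by omega))
      · exact Or.inr (Fin.ext (show x.1 = 1 by omega))
    rcases hx01 with h | h
    · rw [h]; exact h0
    · rw [h]; exact h1
  · have hx2 : x.1 - 2 < n - 2 := by have := x.2; omega
    have h3 := htail ⟨x.1 - 2, hx2⟩
    have hxeq : (⟨x.1 - 2 + 2, by have := x.2; omega⟩ : Fin n) = x :=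
      Fin.ext (show x.1 - 2 + 2 = x.1 by omega)
    rw [hxeq] at h3
    exact h3

set_option maxHeartbeats 1600000 in
/-- let `w ∈ Sₙ` be an involution with `w(1) = j ≥ 3`, `u = s_{j−1}⋯s₁`,
`v = u⁻¹w` and `g₀ = s_{j−1}⋯s₂`.  Then `v⁻¹ ≥ g₀` in the Bruhat order.
(Points are 0-indexed: the letter `k` is `⟨k−1,_⟩ : Fin n`.) -/
theorem g0_le_v_inv_in_bruhat
    (n j : ℕ) (hj : 3 ≤ j) (hjn : j ≤ n)
    (w : Equiv.Perm (Fin n)) (hw : w ^ 2 = 1)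
    (hw1 : w ⟨0, by omega⟩ = ⟨j - 1, by omega⟩) :
    let u : Equiv.Perm (Fin n) :=
      ((List.finRange (j - 1)).reverse.map fun m =>
        Equiv.swap (⟨m.1, by have := m.isLt; omega⟩ : Fin n)
                   (⟨m.1 + 1, by have := m.isLt; omega⟩ : Fin n)).prod
    let g₀ : Equiv.Perm (Fin n) :=
      ((List.finRange (j - 2)).reverse.map fun m =>
        Equiv.swap (⟨m.1 + 1, by have := m.isLt; omega⟩ : Fin n)
                   (⟨m.1 + 2, by have := m.isLt; omega⟩ : Fin n)).prod
    let v : Equiv.Perm (Fin n) := u⁻¹ * w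
    BruhatLE g₀ v⁻¹ := by
  intro u g₀ v
  have h3n : 3 ≤ n := le_trans hj hjn
  have h0n : 0 < n := by omega
  have h1n : 1 < n := by omega
  have hgC : g₀ = cyc n 1 (j - 2) (by omega) := rfl
  have huC : u = cyc n 0 (j - 1) (by omega) := rfl
  have hg : ∀ x : Fin n, (g₀ x).1 =
      if x.1 = 1 then j - 1 else if 1 < x.1 ∧ x.1 ≤ j - 1 then x.1 - 1 else x.1 := by
    intro x
    rw [hgC, cyc_apply]
    have hj2 : 0 < j - 2 := by omega
    split_ifs <;> omega
  have hsq : ∀ x, w (w x) = x := fun x => by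
    rw [← Equiv.Perm.mul_apply, ← sq, hw, Equiv.Perm.one_apply]
  have hwinv : w⁻¹ = w := by
    apply inv_eq_of_mul_eq_one_right
    rw [← sq, hw]
  have hvinv : v⁻¹ = w * u := by
    show (u⁻¹ * w)⁻¹ = w * u
    rw [mul_inv_rev, inv_inv, hwinv]
  have hu0 : u ⟨0, by omega⟩ = ⟨j - 1, by omega⟩ := by
    apply Fin.ext
    rw [huC, cyc_apply]
    norm_num
    omega
  have hu1 : u ⟨1, by omega⟩ = ⟨0, by omega⟩ := by
    apply Fin.ext
    rw [huC, cyc_apply]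
    norm_num
    omega
  have hv0 : (v⁻¹ ⟨0, h0n⟩).1 = 0 := by
    rw [hvinv, Equiv.Perm.mul_apply, hu0, ← hw1, hsq]
  have hv1 : (v⁻¹ ⟨1, h1n⟩).1 = j - 1 := by
    rw [hvinv, Equiv.Perm.mul_apply, hu1, hw1]
  clear_value v g₀
  clear hvinv hu0 hu1 hsq hwinv hw1 hw hgC huC w u
  have key : ∀ N (π : Equiv.Perm (Fin n)), invCount π ≤ N →
      (π ⟨0, h0n⟩).1 = 0 → (π ⟨1, h1n⟩).1 = j - 1 → BruhatLE g₀ π := by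
    intro N
    induction N using Nat.strong_induction_on with
    | _ N ih =>
      intro π hN h0 h1
      by_cases hdesc : ∃ a : ℕ, ∃ (_ : 2 ≤ a) (hlt : a + 1 < n),
          π ⟨a + 1, hlt⟩ < π ⟨a, by omega⟩
      · obtain ⟨a, h2a, hlt, hd⟩ := hdesc
        have h2n : a < n := by omega
        set τ : Equiv.Perm (Fin n) := Equiv.swap ⟨a, h2n⟩ ⟨a + 1, hlt⟩ with hτ
        have hstep : invCount (π * τ) < invCount π :=
          invCount_swap_lt π ⟨a, h2n⟩ ⟨a + 1, hlt⟩ rfl hd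
        have h0' : ((π * τ) ⟨0, h0n⟩).1 = 0 := by
          rw [Equiv.Perm.mul_apply, hτ,
            Equiv.swap_apply_of_ne_of_ne (Fin.ne_of_val_ne (show (0 : ℕ) ≠ a by omega))
              (Fin.ne_of_val_ne (show (0 : ℕ) ≠ a + 1 by omega))]
          exact h0
        have h1' : ((π * τ) ⟨1, h1n⟩).1 = j - 1 := by
          rw [Equiv.Perm.mul_apply, hτ,
            Equiv.swap_apply_of_ne_of_ne (Fin.ne_of_val_ne (show (1 : ℕ) ≠ a by omega))
              (Fin.ne_of_val_ne (show (1 : ℕ) ≠ a + 1 by omega))]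
          exact h1
        have hle := ih (invCount (π * τ)) (by omega) (π * τ) le_rfl h0' h1'
        refine Relation.ReflTransGen.tail hle ⟨hstep, ⟨a, h2n⟩, ⟨a + 1, hlt⟩, ?_⟩
        rw [mul_assoc, hτ, Equiv.swap_mul_self, mul_one]
      · push_neg at hdesc
        have hmπ : StrictMono (fun i : Fin (n - 2) => π ⟨i.1 + 2, by have := i.2; omega⟩) := by
          apply myStrictMono_of_lt_succ
          intro i hi
          simp only
          have hnd := hdesc (i + 2) (by omega) (by omega)
          have hidx : (⟨i + 2 + 1, by omega⟩ : Fin n) = ⟨i + 1 + 2, by omega⟩ :=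
            Fin.ext (show i + 2 + 1 = i + 1 + 2 by omega)
          rw [hidx] at hnd
          have hnev : π ⟨i + 2, by omega⟩ ≠ π ⟨i + 1 + 2, by omega⟩ := by
            intro hc
            have := π.injective hc
            simpa [Fin.ext_iff] using this
          exact lt_of_le_of_ne hnd hnev
        have hmg : StrictMono (fun i : Fin (n - 2) => g₀ ⟨i.1 + 2, by have := i.2; omega⟩) := by
          apply myStrictMono_of_lt_succ
          intro i hi
          simp only
          rw [Fin.lt_def, hg, hg]
          norm_num
          split_ifs <;> omega
        have hπg : π = g₀ := by
          apply perm_eq_of_tail_mono (by omega) π g₀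
          · apply Fin.ext
            rw [h0, hg]
            norm_num
          · apply Fin.ext
            rw [h1, hg]
            norm_num
          · exact hmπ
          · exact hmg
        rw [hπg]
        exact Relation.ReflTransGen.refl
  exact key (invCount v⁻¹) v⁻¹ le_rfl hv0 hv1
end

section
/- Let v, w be involutions in S_n and let R_w^* denote the strictly lower-triangular part of the rank matrix R_w (i.e., (R_w^*)_{i,j} = (R_w)_{i,j} for i > j and 0 otherwise). Then v ≤ w in the Bruhat order if and only if (R_v^*)_{i,j} ≤ (R_w^*)_{i,j} for all i, j. -/
/-- The rank matrix: `(R_w)_{i,j} = #{k ≤ j : w(k) ≥ i}`. -/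
def rankM {n : ℕ} (w : Equiv.Perm (Fin n)) (i j : Fin n) : ℕ :=
  (Finset.univ.filter fun k : Fin n => k ≤ j ∧ i ≤ w k).card

/-- The strictly lower-triangular part of the rank matrix. -/
def rankMStar {n : ℕ} (w : Equiv.Perm (Fin n)) (i j : Fin n) : ℕ :=
  if j < i then rankM w i j else 0

namespace BruhatAux
open Finset Equiv

variable {n : ℕ}


/-- count of positions `k` with `k.val < m` and `w k ≥ i`. -/
def cnt (w : Equiv.Perm (Fin n)) (i : Fin n) (m : ℕ) : ℕ :=
  (Finset.univ.filter fun k : Fin n => k.val < m ∧ i ≤ w k).card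

lemma cnt_zero (w : Equiv.Perm (Fin n)) (i : Fin n) : cnt w i 0 = 0 := by
  simp [cnt]

lemma rankM_eq_cnt (w : Equiv.Perm (Fin n)) (i j : Fin n) :
    rankM w i j = cnt w i (j.val + 1) := by
  unfold rankM cnt
  congr 1
  apply Finset.filter_congr
  intro k _
  rw [Nat.lt_succ_iff, Fin.le_def]

lemma cnt_succ (w : Equiv.Perm (Fin n)) (i : Fin n) (m : ℕ) (hm : m < n) :
    cnt w i (m + 1) = cnt w i m + if i ≤ w ⟨m, hm⟩ then 1 else 0 := by
  classical
  unfold cnt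
  have h1 : (Finset.univ.filter fun k : Fin n => k.val < m + 1 ∧ i ≤ w k) =
      (Finset.univ.filter fun k : Fin n => k.val < m ∧ i ≤ w k) ∪
      (Finset.univ.filter fun k : Fin n => k = ⟨m, hm⟩ ∧ i ≤ w k) := by
    ext k
    simp only [Finset.mem_filter, Finset.mem_union, Finset.mem_univ, true_and]
    constructor
    · rintro ⟨hk, hi⟩
      rcases Nat.lt_succ_iff_lt_or_eq.mp hk with h | h
      · exact Or.inl ⟨h, hi⟩
      · exact Or.inr ⟨Fin.ext h, hi⟩
    · rintro (⟨hk, hi⟩ | ⟨hk, hi⟩)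
      · exact ⟨Nat.lt_succ_of_lt hk, hi⟩
      · exact ⟨by rw [hk]; exact Nat.lt_succ_self m, hi⟩
  rw [h1, Finset.card_union_of_disjoint]
  · congr 1
    by_cases h : i ≤ w ⟨m, hm⟩
    · have : (Finset.univ.filter fun k : Fin n => k = ⟨m, hm⟩ ∧ i ≤ w k) = {(⟨m, hm⟩ : Fin n)} := by
        ext x
        simp only [Finset.mem_filter, Finset.mem_univ, true_and, Finset.mem_singleton]
        constructor
        · exact fun hx => hx.1
        · intro hx; exact ⟨hx, hx ▸ h⟩
      rw [this, if_pos h, Finset.card_singleton]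
    · have : (Finset.univ.filter fun k : Fin n => k = ⟨m, hm⟩ ∧ i ≤ w k) = ∅ := by
        apply Finset.filter_false_of_mem
        rintro x _ ⟨hx, hi⟩
        exact h (hx ▸ hi)
      rw [this, if_neg h, Finset.card_empty]
  · rw [Finset.disjoint_left]
    rintro k hk1 hk2
    simp only [Finset.mem_filter, Finset.mem_univ, true_and] at hk1 hk2
    rw [hk2.1] at hk1
    exact absurd hk1.1 (lt_irrefl m)

lemma cnt_stable (w : Equiv.Perm (Fin n)) (i : Fin n) (m : ℕ) (hm : n ≤ m) :
    cnt w i m = cnt w i n := by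
  unfold cnt
  congr 1
  apply Finset.filter_congr
  intro k _
  constructor
  · exact fun h => ⟨k.isLt, h.2⟩
  · exact fun h => ⟨lt_of_lt_of_le k.isLt hm, h.2⟩

lemma cnt_top (w : Equiv.Perm (Fin n)) (i : Fin n) : cnt w i n = n - i.val := by
  unfold cnt
  have h1 : (Finset.univ.filter fun k : Fin n => k.val < n ∧ i ≤ w k) =
      (Finset.univ.filter fun k : Fin n => i ≤ w k) := by
    apply Finset.filter_congr; intro k _; simp [k.isLt]
  rw [h1]
  have h2 : (Finset.univ.filter fun k : Fin n => i ≤ w k).card =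
      (Finset.univ.filter fun x : Fin n => i ≤ x).card := by
    apply Finset.card_bij (fun k _ => w k)
    · intro k hk; simp only [Finset.mem_filter, Finset.mem_univ, true_and] at *; exact hk
    · intro k _ k' _ h; exact w.injective h
    · intro x hx
      refine ⟨w⁻¹ x, ?_, by simp⟩
      simp only [Finset.mem_filter, Finset.mem_univ, true_and] at *
      simpa using hx
  rw [h2]
  have : (Finset.univ.filter fun x : Fin n => i ≤ x) = Finset.Ici i := by
    ext x; simp
  rw [this, Fin.card_Ici]

/-- interval count -/
def cntIv (w : Equiv.Perm (Fin n)) (i : Fin n) (m₁ m₂ : ℕ) : ℕ :=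
  (Finset.univ.filter fun k : Fin n => m₁ ≤ k.val ∧ k.val < m₂ ∧ i ≤ w k).card


lemma cntIv_def (w : Equiv.Perm (Fin n)) (i : Fin n) (m₁ m₂ : ℕ) :
    cntIv w i m₁ m₂ =
      (Finset.univ.filter fun k : Fin n => m₁ ≤ k.val ∧ k.val < m₂ ∧ i ≤ w k).card := rfl

lemma cnt_split (w : Equiv.Perm (Fin n)) (i : Fin n) (m₁ m₂ : ℕ) (h : m₁ ≤ m₂) :
    cnt w i m₂ = cnt w i m₁ + cntIv w i m₁ m₂ := by
  classical
  unfold cnt cntIv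
  rw [← Finset.card_filter_add_card_filter_not
    (p := fun k : Fin n => k.val < m₁) (s := Finset.univ.filter fun k : Fin n => k.val < m₂ ∧ i ≤ w k)]
  rw [Finset.filter_filter, Finset.filter_filter]
  congr 1
  · congr 1
    ext k
    simp only [Finset.mem_filter, Finset.mem_univ, true_and]
    constructor
    · rintro ⟨⟨_, hi⟩, hm⟩; exact ⟨hm, hi⟩
    · rintro ⟨hm, hi⟩; exact ⟨⟨lt_of_lt_of_le hm h, hi⟩, hm⟩
  · congr 1
    ext k
    simp only [Finset.mem_filter, Finset.mem_univ, true_and]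
    constructor
    · rintro ⟨⟨hm2, hi⟩, hm1⟩; exact ⟨le_of_not_gt hm1, hm2, hi⟩
    · rintro ⟨h1, h2, h3⟩; exact ⟨⟨h2, h3⟩, not_lt.mpr h1⟩



lemma card_filter_split (p : Fin n → Prop) [DecidablePred p] (a : Fin n) :
    (Finset.univ.filter p).card =
      ((Finset.univ.erase a).filter p).card + if p a then 1 else 0 := by
  classical
  have h : (Finset.univ : Finset (Fin n)) = insert a (Finset.univ.erase a) := by
    rw [Finset.insert_erase (Finset.mem_univ a)]
  nth_rewrite 1 [h]
  rw [Finset.filter_insert]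
  by_cases hp : p a
  · rw [if_pos hp, if_pos hp, Finset.card_insert_of_notMem]
    intro hmem
    exact (Finset.mem_erase.mp (Finset.mem_of_mem_filter a hmem)).1 rfl
  · rw [if_neg hp, if_neg hp, Nat.add_zero]

/-- column outside `[a,b)`: rank unchanged by the swap. -/
lemma rankM_swap_outside (w : Equiv.Perm (Fin n)) (a b i j : Fin n)
    (hab : a < b) (hj : j < a ∨ b ≤ j) :
    rankM (w * Equiv.swap a b) i j = rankM w i j := by
  classical
  rcases hj with hj | hj
  · unfold rankM
    congr 1
    apply Finset.filter_congr
    intro k _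
    by_cases hk : k ≤ j
    · have hka : k ≠ a := fun h => absurd (h ▸ hk) (not_le.mpr hj)
      have hkb : k ≠ b := fun h => absurd (h ▸ hk) (not_le.mpr (lt_trans hj hab))
      rw [Equiv.Perm.mul_apply, Equiv.swap_apply_of_ne_of_ne hka hkb]
    · simp [hk]
  · unfold rankM
    apply Finset.card_bij' (fun k _ => Equiv.swap a b k) (fun k _ => Equiv.swap a b k)
    · intro k hk
      simp only [Finset.mem_filter, Finset.mem_univ, true_and] at *
      refine ⟨?_, by simpa [Equiv.Perm.mul_apply] using hk.2⟩
      by_cases h1 : k = a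
      · simpa [h1] using hj
      · by_cases h2 : k = b
        · subst h2; simpa using le_trans (le_of_lt hab) hj
        · rw [Equiv.swap_apply_of_ne_of_ne h1 h2]; exact hk.1
    · intro k hk
      simp only [Finset.mem_filter, Finset.mem_univ, true_and] at *
      constructor
      · by_cases h1 : k = a
        · simpa [h1] using hj
        · by_cases h2 : k = b
          · subst h2; simpa using le_trans (le_of_lt hab) hj
          · rw [Equiv.swap_apply_of_ne_of_ne h1 h2]; exact hk.1
      · rw [Equiv.Perm.mul_apply, Equiv.swap_apply_self]; exact hk.2
    · intro k _; exact Equiv.swap_apply_self a b k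
    · intro k _; exact Equiv.swap_apply_self a b k

/-- column inside `[a,b)`: rank changes by swapping the indicator at `a`. -/
lemma rankM_swap_inside (w : Equiv.Perm (Fin n)) (a b i j : Fin n)
    (hab : a < b) (hja : a ≤ j) (hjb : j < b) :
    rankM (w * Equiv.swap a b) i j + (if i ≤ w a then 1 else 0) =
      rankM w i j + (if i ≤ w b then 1 else 0) := by
  classical
  unfold rankM
  rw [card_filter_split (fun k : Fin n => k ≤ j ∧ i ≤ (w * Equiv.swap a b) k) a,
      card_filter_split (fun k : Fin n => k ≤ j ∧ i ≤ w k) a]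
  have hfe : ((Finset.univ.erase a).filter fun k : Fin n => k ≤ j ∧ i ≤ (w * Equiv.swap a b) k) =
      ((Finset.univ.erase a).filter fun k : Fin n => k ≤ j ∧ i ≤ w k) := by
    apply Finset.filter_congr
    intro k hk
    have hka : k ≠ a := (Finset.mem_erase.mp hk).1
    by_cases hkj : k ≤ j
    · have hkb : k ≠ b := fun h => absurd (h ▸ hkj) (not_le.mpr hjb)
      rw [Equiv.Perm.mul_apply, Equiv.swap_apply_of_ne_of_ne hka hkb]
    · simp [hkj]
  rw [hfe]
  have h1 : ((a ≤ j) ∧ i ≤ (w * Equiv.swap a b) a) ↔ i ≤ w b := by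
    rw [Equiv.Perm.mul_apply, Equiv.swap_apply_left]
    simp [hja]
  have h2 : ((a ≤ j) ∧ i ≤ w a) ↔ i ≤ w a := by simp [hja]
  rw [if_congr h1 rfl rfl, if_congr h2 rfl rfl]
  omega

/-- monotonicity of ranks under a length-increasing swap. -/
lemma rankM_swap_mono (w : Equiv.Perm (Fin n)) (a b : Fin n)
    (hab : a < b) (hw : w a < w b) (i j : Fin n) :
    rankM w i j ≤ rankM (w * Equiv.swap a b) i j := by
  by_cases hj : a ≤ j ∧ j < b
  · have := rankM_swap_inside w a b i j hab hj.1 hj.2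
    have hind : (if i ≤ w a then 1 else 0) ≤ (if i ≤ w b then 1 else 0) := by
      by_cases h : i ≤ w a
      · rw [if_pos h, if_pos (le_trans h (le_of_lt hw))]
      · rw [if_neg h]
        exact Nat.zero_le _
    omega
  · have : j < a ∨ b ≤ j := by
      rcases not_and_or.mp hj with h | h
      · exact Or.inl (not_le.mp h)
      · exact Or.inr (not_lt.mp h)
    rw [rankM_swap_outside w a b i j hab this]



/-- the adjacent swap preserves the order of every pair except `(a,b)` itself. -/
lemma adj_swap_order {a b : Fin n} (hab : a.val + 1 = b.val) {p q : Fin n}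
    (hpq : p < q) (hne : ¬(p = a ∧ q = b)) :
    Equiv.swap a b p < Equiv.swap a b q := by
  have hval : ∀ x : Fin n, ((Equiv.swap a b x).val = if x = a then b.val
      else if x = b then a.val else x.val) := by
    intro x
    by_cases h1 : x = a
    · rw [if_pos h1, h1, Equiv.swap_apply_left]
    · by_cases h2 : x = b
      · rw [if_neg h1, if_pos h2, h2, Equiv.swap_apply_right]
      · rw [if_neg h1, if_neg h2, Equiv.swap_apply_of_ne_of_ne h1 h2]
  rw [Fin.lt_def] at hpq ⊢
  rw [hval p, hval q]
  have hpa := Fin.val_eq_val p a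
  have hpb := Fin.val_eq_val p b
  have hqa := Fin.val_eq_val q a
  have hqb := Fin.val_eq_val q b
  have hne' : ¬(p.val = a.val ∧ q.val = b.val) := by
    rintro ⟨h1, h2⟩
    exact hne ⟨Fin.ext h1, Fin.ext h2⟩
  have hba : b ≠ a := by rw [Fin.ne_iff_vne]; omega
  by_cases h1 : p = a <;> by_cases h2 : p = b <;> by_cases h3 : q = a <;>
    by_cases h4 : q = b <;> simp only [h1, h2, h3, h4, hba, if_true, if_false] <;> omega

/-- adjacent ascent: inversion count increases by exactly one. -/
lemma invCount_adj_swap (w : Equiv.Perm (Fin n)) (a b : Fin n)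
    (hab : a.val + 1 = b.val) (hw : w a < w b) :
    invCount (w * Equiv.swap a b) = invCount w + 1 := by
  classical
  set σ := Equiv.swap a b with hσ
  have hab' : a < b := by rw [Fin.lt_def]; omega
  set A := (Finset.univ.filter fun p : Fin n × Fin n => p.1 < p.2 ∧ w p.2 < w p.1) with hA
  set B := (Finset.univ.filter fun p : Fin n × Fin n =>
      p.1 < p.2 ∧ (w * σ) p.2 < (w * σ) p.1) with hB
  have key : B = insert (a, b) (A.image fun z => (σ z.1, σ z.2)) := by
    ext z
    simp only [hA, hB, Finset.mem_insert, Finset.mem_image, Finset.mem_filter,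
      Finset.mem_univ, true_and]
    simp only [Equiv.Perm.mul_apply]
    constructor
    · rintro ⟨hlt, hval⟩
      by_cases hz : z.1 = a ∧ z.2 = b
      · left
        exact Prod.ext hz.1 hz.2
      · right
        refine ⟨(σ z.1, σ z.2), ⟨adj_swap_order hab hlt hz, ?_⟩, ?_⟩
        · simpa [hσ, Equiv.swap_apply_self] using hval
        · simp [hσ, Equiv.swap_apply_self]
    · rintro (hz | ⟨y, ⟨hylt, hyval⟩, hyz⟩)
      · subst hz
        exact ⟨hab', by simpa [hσ] using hw⟩
      · have hz1 : z.1 = σ y.1 := by rw [← hyz]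
        have hz2 : z.2 = σ y.2 := by rw [← hyz]
        refine ⟨?_, ?_⟩
        · rw [hz1, hz2]
          apply adj_swap_order hab hylt
          rintro ⟨hy1, hy2⟩
          rw [hy1, hy2] at hyval
          exact absurd hw (not_lt.mpr (le_of_lt hyval))
        · rw [hz1, hz2]
          simpa [hσ, Equiv.swap_apply_self] using hyval
  have hnotmem : (a, b) ∉ (A.image fun z => (σ z.1, σ z.2)) := by
    simp only [Finset.mem_image, hA, Finset.mem_filter, Finset.mem_univ, true_and]
    rintro ⟨y, ⟨hylt, hyval⟩, hyz⟩
    have h1 : σ y.1 = a := (Prod.ext_iff.mp hyz).1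
    have h2 : σ y.2 = b := (Prod.ext_iff.mp hyz).2
    have hy1 : y.1 = b := by
      have := congrArg σ h1
      simpa [hσ, Equiv.swap_apply_self] using this
    have hy2 : y.2 = a := by
      have := congrArg σ h2
      simpa [hσ, Equiv.swap_apply_self] using this
    rw [hy1, hy2] at hylt
    exact absurd hylt (not_lt.mpr (le_of_lt hab'))
  have hinj : Function.Injective (fun z : Fin n × Fin n => (σ z.1, σ z.2)) := by
    intro x y hxy
    have h1 : σ x.1 = σ y.1 := congrArg Prod.fst hxy
    have h2 : σ x.2 = σ y.2 := congrArg Prod.snd hxy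
    exact Prod.ext (σ.injective h1) (σ.injective h2)
  calc invCount (w * σ) = B.card := rfl
    _ = (insert (a, b) (A.image fun z => (σ z.1, σ z.2))).card := by rw [key]
    _ = (A.image fun z => (σ z.1, σ z.2)).card + 1 := Finset.card_insert_of_notMem hnotmem
    _ = A.card + 1 := by rw [Finset.card_image_of_injective _ hinj]
    _ = invCount w + 1 := rfl



/-- adjacent descent: inversion count decreases by exactly one. -/
lemma invCount_adj_swap_desc (w : Equiv.Perm (Fin n)) (a b : Fin n)
    (hab : a.val + 1 = b.val) (hw : w b < w a) :
    invCount (w * Equiv.swap a b) + 1 = invCount w := by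
  have h1 : (w * Equiv.swap a b) a < (w * Equiv.swap a b) b := by
    simpa [Equiv.Perm.mul_apply] using hw
  have := invCount_adj_swap (w * Equiv.swap a b) a b hab h1
  rw [mul_assoc, Equiv.swap_mul_self, mul_one] at this
  omega

lemma invCount_swap_succ : ∀ (d : ℕ) (w : Equiv.Perm (Fin n)) (a b : Fin n),
    b.val = a.val + d + 1 → w a < w b →
    invCount w + 1 ≤ invCount (w * Equiv.swap a b) := by
  intro d
  induction d using Nat.strong_induction_on with
  | _ d IH =>
    intro w a b hd hw
    match d, hd with
    | 0, hd =>
      rw [invCount_adj_swap w a b (by omega) hw]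
    | (d' + 1), hd =>
      have hmn : a.val + 1 < n := by have := b.isLt; omega
      set m : Fin n := ⟨a.val + 1, hmn⟩ with hm
      have ham : a ≠ m := by rw [Fin.ne_iff_vne]; simp [hm]
      have hmb : m ≠ b := by rw [Fin.ne_iff_vne]; simp [hm]; omega
      have hab : a ≠ b := by rw [Fin.ne_iff_vne]; omega
      set σ := Equiv.swap a m with hσ
      set τ := Equiv.swap m b with hτ
      have hσb : σ b = b := Equiv.swap_apply_of_ne_of_ne (Ne.symm hab) (Ne.symm hmb)
      have hστσ : σ * τ * σ = Equiv.swap a b := by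
        have h1 : σ * τ = Equiv.swap (σ m) (σ b) * σ := Equiv.mul_swap_eq_swap_mul σ m b
        rw [h1, Equiv.swap_apply_right, hσb] at *
        rw [mul_assoc, Equiv.swap_mul_self, mul_one]
      have hdecomp : w * Equiv.swap a b = ((w * σ) * τ) * σ := by
        rw [mul_assoc, mul_assoc, ← mul_assoc σ τ σ, hστσ]
      set u1 := w * σ with hu1
      have hu1a : u1 a = w m := by simp [hu1, hσ, Equiv.Perm.mul_apply]
      have hu1m : u1 m = w a := by simp [hu1, hσ, Equiv.Perm.mul_apply]
      have hu1b : u1 b = w b := by simp [hu1, Equiv.Perm.mul_apply, hσb]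
      set u2 := u1 * τ with hu2
      have hτa : τ a = a := Equiv.swap_apply_of_ne_of_ne ham hab
      have hu2a : u2 a = w m := by simp [hu2, Equiv.Perm.mul_apply, hτa, hu1a]
      have hu2m : u2 m = w b := by simp [hu2, hτ, Equiv.Perm.mul_apply, hu1b]
      have hstep2 : invCount u1 + 1 ≤ invCount u2 := by
        apply IH d' (by omega) u1 m b (by simp [hm]; omega)
        rw [hu1m, hu1b]; exact hw
      have hadjam : a.val + 1 = m.val := by simp [hm]
      rcases lt_trichotomy (w m) (w a) with hcase | hcase | hcase
      · -- w m < w a (case B)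
        have h1 : invCount u1 + 1 = invCount w := by
          apply invCount_adj_swap_desc w a m hadjam hcase
        have h3 : invCount (u2 * σ) = invCount u2 + 1 := by
          apply invCount_adj_swap u2 a m hadjam
          rw [hu2a, hu2m]; exact lt_trans hcase hw
        rw [hdecomp, h3]
        omega
      · exact absurd (w.injective hcase) (Ne.symm ham)
      · rcases lt_trichotomy (w m) (w b) with hcase2 | hcase2 | hcase2
        · -- w a < w m < w b (case A)
          have h1 : invCount u1 = invCount w + 1 := invCount_adj_swap w a m hadjam hcase
          have h3 : invCount (u2 * σ) = invCount u2 + 1 := by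
            apply invCount_adj_swap u2 a m hadjam
            rw [hu2a, hu2m]; exact hcase2
          rw [hdecomp, h3]
          omega
        · exact absurd (w.injective hcase2) hmb
        · -- w b < w m (case C)
          have h1 : invCount u1 = invCount w + 1 := invCount_adj_swap w a m hadjam hcase
          have h3 : invCount (u2 * σ) + 1 = invCount u2 := by
            apply invCount_adj_swap_desc u2 a m hadjam
            rw [hu2a, hu2m]; exact hcase2
          rw [hdecomp]
          omega

lemma invCount_swap_lt (w : Equiv.Perm (Fin n)) (a b : Fin n)
    (hab : a < b) (hw : w a < w b) :
    invCount w < invCount (w * Equiv.swap a b) := by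
  have h := invCount_swap_succ (b.val - a.val - 1) w a b (by rw [Fin.lt_def] at hab; omega) hw
  omega



lemma eq_of_indicator (x y : Fin n)
    (h : ∀ i : Fin n, (if i ≤ x then 1 else 0) = (if i ≤ y then (1:ℕ) else 0)) : x = y := by
  have h1 := h x
  have h2 := h y
  rw [if_pos (le_refl x)] at h1
  rw [if_pos (le_refl y)] at h2
  by_cases hxy : x ≤ y
  · by_cases hyx : y ≤ x
    · exact le_antisymm hxy hyx
    · rw [if_neg hyx] at h2; omega
  · rw [if_neg hxy] at h1; omega

lemma eq_of_rankM_eq (v w : Equiv.Perm (Fin n))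
    (h : ∀ i j, rankM v i j = rankM w i j) : v = w := by
  have hc : ∀ (i : Fin n) (m : ℕ), m ≤ n → cnt v i m = cnt w i m := by
    intro i m hm
    match m with
    | 0 => rw [cnt_zero, cnt_zero]
    | (k + 1) =>
      have hk : k < n := hm
      have := h i ⟨k, hk⟩
      rwa [rankM_eq_cnt, rankM_eq_cnt] at this
  apply Equiv.ext
  intro k
  have hind : ∀ i : Fin n, (if i ≤ v k then 1 else 0) = (if i ≤ w k then (1:ℕ) else 0) := by
    intro i
    have h1 := cnt_succ v i k.val k.isLt
    have h2 := cnt_succ w i k.val k.isLt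
    have h3 := hc i k.val (le_of_lt k.isLt)
    have h4 := hc i (k.val + 1) k.isLt
    simp only [Fin.eta] at h1 h2
    omega
  exact eq_of_indicator _ _ hind

lemma rank_mono_of_step (x y : Equiv.Perm (Fin n))
    (hlt : invCount x < invCount y) (p q : Fin n) (hy : y = x * Equiv.swap p q) :
    ∀ i j, rankM x i j ≤ rankM y i j := by
  rcases lt_trichotomy p q with hpq | hpq | hpq
  · subst hy
    rcases lt_trichotomy (x p) (x q) with hx | hx | hx
    · exact fun i j => rankM_swap_mono x p q hpq hx i j
    · exact absurd (x.injective hx) (Fin.ne_of_lt hpq)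
    · exfalso
      have h1 : (x * Equiv.swap p q) p < (x * Equiv.swap p q) q := by
        simpa [Equiv.Perm.mul_apply] using hx
      have h2 := invCount_swap_lt (x * Equiv.swap p q) p q hpq h1
      rw [mul_assoc, Equiv.swap_mul_self, mul_one] at h2
      omega
  · subst hpq
    rw [Equiv.swap_self] at hy
    have : y = x := by rw [hy]; exact mul_one x
    rw [this] at hlt
    omega
  · rw [Equiv.swap_comm] at hy
    subst hy
    rcases lt_trichotomy (x q) (x p) with hx | hx | hx
    · exact fun i j => rankM_swap_mono x q p hpq hx i j
    · exact absurd (x.injective hx) (Fin.ne_of_lt hpq)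
    · exfalso
      have h1 : (x * Equiv.swap q p) q < (x * Equiv.swap q p) p := by
        simpa [Equiv.Perm.mul_apply] using hx
      have h2 := invCount_swap_lt (x * Equiv.swap q p) q p hpq h1
      rw [mul_assoc, Equiv.swap_mul_self, mul_one] at h2
      omega

lemma bruhatLE_rank_mono (v w : Equiv.Perm (Fin n)) (h : BruhatLE v w) :
    ∀ i j, rankM v i j ≤ rankM w i j := by
  unfold BruhatLE at h
  induction h with
  | refl => exact fun i j => le_refl _
  | tail hxy hstep ih =>
    obtain ⟨hlt, p, q, hy⟩ := hstep
    exact fun i j => le_trans (ih i j) (rank_mono_of_step _ _ hlt p q hy i j)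



lemma cnt_succ' (u : Equiv.Perm (Fin n)) (i : Fin n) (k : Fin n) :
    cnt u i (k.val + 1) = cnt u i k.val + if i ≤ u k then 1 else 0 := by
  have := cnt_succ u i k.val k.isLt
  simpa only [Fin.eta] using this

lemma key_step (v w : Equiv.Perm (Fin n))
    (hle : ∀ i j, rankM v i j ≤ rankM w i j) (hne : v ≠ w) :
    ∃ a b : Fin n, a < b ∧ v a < v b ∧
      (∀ i j, rankM (v * Equiv.swap a b) i j ≤ rankM w i j) ∧
      rankM v (v b) a + 1 ≤ rankM (v * Equiv.swap a b) (v b) a := by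
  classical
  -- cnt inequalities
  have hcle : ∀ (i : Fin n) (m : ℕ), m ≤ n → cnt v i m ≤ cnt w i m := by
    intro i m hm
    match m with
    | 0 => rw [cnt_zero, cnt_zero]
    | (k + 1) =>
      have hk : k < n := hm
      have := hle i ⟨k, hk⟩
      rwa [rankM_eq_cnt, rankM_eq_cnt] at this
  -- bad columns
  set S : Finset (Fin n) := Finset.univ.filter
    (fun j : Fin n => ∃ i, rankM v i j ≠ rankM w i j) with hSdef
  have hSne : S.Nonempty := by
    by_contra hS
    apply hne
    apply eq_of_rankM_eq
    intro i j
    by_contra hij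
    exact hS ⟨j, by simp [hSdef]; exact ⟨i, hij⟩⟩
  set jm := S.max' hSne with hjm
  obtain ⟨i0, hi0⟩ : ∃ i, rankM v i jm ≠ rankM w i jm := by
    have := S.max'_mem hSne
    simpa [hSdef] using this
  have hmaxcol : ∀ j, jm < j → ∀ i, rankM v i j = rankM w i j := by
    intro j hj i
    by_contra hij
    have hjS : j ∈ S := by simp [hSdef]; exact ⟨i, hij⟩
    exact absurd (S.le_max' j hjS) (not_le.mpr hj)
  -- jm is not the last column
  have hlastcol : ∀ (u : Equiv.Perm (Fin n)) (i : Fin n) (j : Fin n), j.val = n - 1 →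
      rankM u i j = n - i.val := by
    intro u i j hj
    rw [rankM_eq_cnt]
    have h1 : j.val + 1 = n := by have := j.isLt; omega
    rw [h1, cnt_top]
  have hbn : jm.val + 1 < n := by
    rcases Nat.lt_or_ge (jm.val + 1) n with h | h
    · exact h
    · exfalso
      have hjmval : jm.val = n - 1 := by have := jm.isLt; omega
      exact hi0 (by rw [hlastcol v i0 jm hjmval, hlastcol w i0 jm hjmval])
  set b : Fin n := ⟨jm.val + 1, hbn⟩ with hbdef
  have hjmb : jm < b := by rw [Fin.lt_def]; simp [hbdef]
  -- E1
  have hE1 : ∀ i : Fin n, cnt v i b.val + (if i ≤ v b then 1 else 0) =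
      cnt w i b.val + (if i ≤ w b then 1 else 0) := by
    intro i
    have hcol := hmaxcol b hjmb i
    rw [rankM_eq_cnt, rankM_eq_cnt] at hcol
    have h1 := cnt_succ' v i b
    have h2 := cnt_succ' w i b
    omega
  have hlt0 : cnt v i0 b.val < cnt w i0 b.val := by
    have h1 : cnt v i0 b.val ≤ cnt w i0 b.val := hcle i0 b.val (le_of_lt b.isLt)
    have h2 : rankM v i0 jm ≠ rankM w i0 jm := hi0
    rw [rankM_eq_cnt, rankM_eq_cnt] at h2
    have h3 : jm.val + 1 = b.val := rfl
    rw [h3] at h2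
    omega
  -- w b < v b
  have hwb : w b < v b := by
    rcases lt_trichotomy (v b) (w b) with h | h | h
    · exfalso
      have := hE1 (w b)
      rw [if_neg (not_le.mpr h), if_pos (le_refl _)] at this
      have h2 := hcle (w b) b.val (le_of_lt b.isLt)
      omega
    · exfalso
      have : ∀ i : Fin n, cnt v i b.val = cnt w i b.val := by
        intro i
        have := hE1 i
        rw [h] at this
        omega
      exact absurd (this i0) (ne_of_lt hlt0)
    · exact h
  have hE2 : ∀ i : Fin n, i ≤ w b → cnt v i b.val = cnt w i b.val := by
    intro i hi
    have := hE1 i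
    rw [if_pos hi, if_pos (le_trans hi (le_of_lt hwb))] at this
    omega
  have hE3 : ∀ i : Fin n, w b < i → i ≤ v b → cnt w i b.val = cnt v i b.val + 1 := by
    intro i hi1 hi2
    have := hE1 i
    rw [if_pos hi2, if_neg (not_le.mpr hi1)] at this
    omega
  -- beyond b, v = w
  have hcnteq : ∀ (m : ℕ), b.val + 1 ≤ m → m ≤ n → ∀ i, cnt v i m = cnt w i m := by
    intro m hm1 hm2 i
    match m, hm1 with
    | (t + 1), hm1 =>
      have ht : t < n := hm2
      have hcol := hmaxcol ⟨t, ht⟩ (by rw [Fin.lt_def]; simp [hbdef] at hm1 ⊢; omega) i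
      rw [rankM_eq_cnt, rankM_eq_cnt] at hcol
      exact hcol
  have hbeyond : ∀ k : Fin n, b < k → v k = w k := by
    intro k hk
    have hk1 : b.val + 1 ≤ k.val := hk
    apply eq_of_indicator
    intro i
    have h1 := cnt_succ' v i k
    have h2 := cnt_succ' w i k
    have h3 := hcnteq k.val hk1 (le_of_lt k.isLt) i
    have h4 := hcnteq (k.val + 1) (by omega) k.isLt i
    omega
  -- candidates
  set C : Finset (Fin n) := Finset.univ.filter
    (fun k : Fin n => k < b ∧ w b ≤ v k ∧ v k < v b) with hCdef
  have hCne : C.Nonempty := by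
    set k0 := v.symm (w b) with hk0
    have hvk0 : v k0 = w b := by simp [hk0]
    have hk0b : k0 ≠ b := by
      intro h
      rw [h] at hvk0
      exact absurd hvk0 (ne_of_gt hwb)
    have hk0lt : k0 < b := by
      rcases lt_or_ge k0 b with h | h
      · exact h
      · exfalso
        have hbk0 : b < k0 := lt_of_le_of_ne h (Ne.symm hk0b)
        have := hbeyond k0 hbk0
        rw [this] at hvk0
        exact hk0b (w.injective hvk0)
    exact ⟨k0, by simp [hCdef]; exact ⟨hk0lt, le_of_eq hvk0.symm, hvk0 ▸ hwb⟩⟩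
  set a := C.max' hCne with hadef
  have haC : a ∈ C := C.max'_mem hCne
  have hab : a < b := by
    have := haC; simp [hCdef] at this; exact this.1
  have hwba : w b ≤ v a := by
    have := haC; simp [hCdef] at this; exact this.2.1
  have hvab : v a < v b := by
    have := haC; simp [hCdef] at this; exact this.2.2
  have hexcl : ∀ k : Fin n, a < k → k < b → (v k < w b ∨ v b < v k) := by
    intro k hka hkb
    by_contra hcon
    push_neg at hcon
    have hk1 : w b ≤ v k := hcon.1
    have hk2 : v k ≤ v b := hcon.2
    have hk3 : v k ≠ v b := by
      intro h
      exact absurd (v.injective h) (ne_of_lt hkb)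
    have hkC : k ∈ C := by simp [hCdef]; exact ⟨hkb, hk1, lt_of_le_of_ne hk2 hk3⟩
    exact absurd (C.le_max' k hkC) (not_le.mpr hka)
  -- subset-type monotonicity for interval counts
  have hIvMono : ∀ (u : Equiv.Perm (Fin n)) (i i' : Fin n) (m₁ m₂ : ℕ), i' ≤ i →
      cntIv u i m₁ m₂ ≤ cntIv u i' m₁ m₂ := by
    intro u i i' m₁ m₂ hii
    rw [cntIv_def, cntIv_def]
    apply Finset.card_le_card
    intro x hx
    simp only [Finset.mem_filter, Finset.mem_univ, true_and] at hx ⊢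
    exact ⟨hx.1, hx.2.1, le_trans hii hx.2.2⟩
  -- the rectangle estimate
  have hrect : ∀ i j : Fin n, a ≤ j → j < b → v a < i → i ≤ v b →
      rankM v i j + 1 ≤ rankM w i j := by
    intro i j hja hjb hia hib
    have hjjb : j.val + 1 ≤ b.val := hjb
    have hsv := cnt_split v i (j.val + 1) b.val hjjb
    have hsw := cnt_split w i (j.val + 1) b.val hjjb
    have hF1 : cnt w i b.val = cnt v i b.val + 1 :=
      hE3 i (lt_of_le_of_lt hwba hia) hib
    -- exclusion: on the interval, (i ≤ v k) ↔ (w b ≤ v k)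
    have hR3 : cntIv v i (j.val + 1) b.val = cntIv v (w b) (j.val + 1) b.val := by
      rw [cntIv_def, cntIv_def]
      congr 1
      apply Finset.filter_congr
      intro k _
      constructor
      · rintro ⟨h1, h2, h3⟩
        exact ⟨h1, h2, le_trans hwba (le_trans (le_of_lt hia) h3)⟩
      · rintro ⟨h1, h2, h3⟩
        refine ⟨h1, h2, ?_⟩
        have hka : a < k := by
          rw [Fin.lt_def]
          have : a.val ≤ j.val := hja
          omega
        have hkb : k < b := by rw [Fin.lt_def]; exact h2
        rcases hexcl k hka hkb with h | h
        · exact absurd h3 (not_le.mpr h)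
        · exact le_trans hib (le_of_lt h)
    -- F6
    have hsv2 := cnt_split v (w b) (j.val + 1) b.val hjjb
    have hsw2 := cnt_split w (w b) (j.val + 1) b.val hjjb
    have hE2wb : cnt v (w b) b.val = cnt w (w b) b.val := hE2 (w b) (le_refl _)
    have hprefix : cnt v (w b) (j.val + 1) ≤ cnt w (w b) (j.val + 1) :=
      hcle (w b) (j.val + 1) (le_trans hjjb (le_of_lt b.isLt))
    have hF6 : cntIv w (w b) (j.val + 1) b.val ≤ cntIv v (w b) (j.val + 1) b.val := by
      omega
    have hQchain : cntIv w i (j.val + 1) b.val ≤ cntIv v i (j.val + 1) b.val := by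
      have hwbi : w b ≤ i := le_of_lt (lt_of_le_of_lt hwba hia)
      have h1 : cntIv w i (j.val + 1) b.val ≤ cntIv w (w b) (j.val + 1) b.val :=
        hIvMono w i (w b) _ _ hwbi
      omega
    rw [rankM_eq_cnt, rankM_eq_cnt]
    omega
  -- assemble
  refine ⟨a, b, hab, hvab, ?_, ?_⟩
  · intro i j
    by_cases hj : a ≤ j ∧ j < b
    · have hins := rankM_swap_inside v a b i j hab hj.1 hj.2
      by_cases hi1 : i ≤ v a
      · rw [if_pos hi1, if_pos (le_trans hi1 (le_of_lt hvab))] at hins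
        have := hle i j
        omega
      · by_cases hi2 : i ≤ v b
        · rw [if_neg hi1, if_pos hi2] at hins
          have := hrect i j hj.1 hj.2 (not_le.mp hi1) hi2
          omega
        · rw [if_neg hi1, if_neg hi2] at hins
          have := hle i j
          omega
    · have : j < a ∨ b ≤ j := by
        rcases not_and_or.mp hj with h | h
        · exact Or.inl (not_le.mp h)
        · exact Or.inr (not_lt.mp h)
      rw [rankM_swap_outside v a b i j hab this]
      exact hle i j
  · have hins := rankM_swap_inside v a b (v b) a hab (le_refl a) hab
    rw [if_neg (not_le.mpr hvab), if_pos (le_refl (v b))] at hins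
    omega

lemma rank_dom_bruhat : ∀ (N : ℕ) (v w : Equiv.Perm (Fin n)),
    (∑ p : Fin n × Fin n, (rankM w p.1 p.2 - rankM v p.1 p.2)) = N →
    (∀ i j, rankM v i j ≤ rankM w i j) → BruhatLE v w := by
  intro N
  induction N using Nat.strong_induction_on with
  | _ N IH =>
    intro v w hN hle
    by_cases hvw : v = w
    · subst hvw
      exact Relation.ReflTransGen.refl
    · obtain ⟨a, b, hab, hvab, hle', hstrict⟩ := key_step v w hle hvw
      set v' := v * Equiv.swap a b with hv'
      have hmono : ∀ i j, rankM v i j ≤ rankM v' i j :=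
        fun i j => rankM_swap_mono v a b hab hvab i j
      have hsumlt : (∑ p : Fin n × Fin n, (rankM w p.1 p.2 - rankM v' p.1 p.2)) < N := by
        rw [← hN]
        apply Finset.sum_lt_sum
        · intro p _
          have h1 := hmono p.1 p.2
          have h2 := hle' p.1 p.2
          omega
        · refine ⟨(v b, a), Finset.mem_univ _, ?_⟩
          show rankM w (v b) a - rankM v' (v b) a < rankM w (v b) a - rankM v (v b) a
          have h2 := hle' (v b) a
          omega
      have hstep : invCount v < invCount v' ∧ ∃ i j : Fin n, v' = v * Equiv.swap i j :=
        ⟨invCount_swap_lt v a b hab hvab, a, b, rfl⟩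
      exact Relation.ReflTransGen.head hstep (IH _ hsumlt v' w rfl hle')



lemma rankM_bot (u : Equiv.Perm (Fin n)) (i j : Fin n) (hi : i.val = 0) :
    rankM u i j = j.val + 1 := by
  unfold rankM
  have h1 : (Finset.univ.filter fun k : Fin n => k ≤ j ∧ i ≤ u k) = Finset.Iic j := by
    ext k
    simp only [Finset.mem_filter, Finset.mem_univ, true_and, Finset.mem_Iic]
    constructor
    · exact fun h => h.1
    · intro h
      exact ⟨h, by rw [Fin.le_def, hi]; exact Nat.zero_le _⟩
  rw [h1, Fin.card_Iic]

lemma rankM_last (u : Equiv.Perm (Fin n)) (i j : Fin n) (hj : j.val = n - 1) :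
    rankM u i j = n - i.val := by
  rw [rankM_eq_cnt]
  have h1 : j.val + 1 = n := by have := j.isLt; omega
  rw [h1, cnt_top]

lemma card_ge_val (i : Fin n) :
    (Finset.univ.filter fun x : Fin n => i ≤ x).card = n - i.val := by
  have : (Finset.univ.filter fun x : Fin n => i ≤ x) = Finset.Ici i := by
    ext x; simp
  rw [this, Fin.card_Ici]

lemma card_perm_ge (u : Equiv.Perm (Fin n)) (i : Fin n) :
    (Finset.univ.filter fun m : Fin n => i ≤ u m).card = n - i.val := by
  rw [← card_ge_val i]
  apply Finset.card_bij (fun m _ => u m)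
  · intro m hm
    simp only [Finset.mem_filter, Finset.mem_univ, true_and] at *
    exact hm
  · intro m _ m' _ h
    exact u.injective h
  · intro x hx
    refine ⟨u⁻¹ x, ?_, by simp⟩
    simp only [Finset.mem_filter, Finset.mem_univ, true_and] at *
    simpa using hx

/-- for an involution, the rank matrix can be computed on the other side. -/
lemma rankM_invol (u : Equiv.Perm (Fin n)) (hu : ∀ x, u (u x) = x) (i j : Fin n) :
    rankM u i j = (Finset.univ.filter fun m : Fin n => i ≤ m ∧ u m ≤ j).card := by
  unfold rankM
  apply Finset.card_bij (fun k _ => u k)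
  · intro k hk
    simp only [Finset.mem_filter, Finset.mem_univ, true_and] at *
    exact ⟨hk.2, by rw [hu]; exact hk.1⟩
  · intro k _ k' _ h
    exact u.injective h
  · intro m hm
    simp only [Finset.mem_filter, Finset.mem_univ, true_and] at *
    exact ⟨u m, ⟨hm.2, by rw [hu]; exact hm.1⟩, by rw [hu]⟩

/-- the reflection identity for involutions. -/
lemma rankM_invol_identity (u : Equiv.Perm (Fin n)) (hu : ∀ x, u (u x) = x)
    (i j jp im : Fin n) (hi : 1 ≤ i.val)
    (hjp : jp.val = j.val + 1) (him : im.val = i.val - 1) :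
    rankM u i j + (n - jp.val) = (n - i.val) + rankM u jp im := by
  classical
  set B := (Finset.univ.filter fun m : Fin n => i ≤ m ∧ j < u m).card with hB
  have eq1 : n - i.val = rankM u i j + B := by
    have hr1 : rankM u i j =
        ((Finset.univ.filter fun m : Fin n => i ≤ m).filter fun m : Fin n => u m ≤ j).card := by
      rw [rankM_invol u hu, Finset.filter_filter]
    have hb1 : B =
        ((Finset.univ.filter fun m : Fin n => i ≤ m).filter fun m : Fin n => ¬ u m ≤ j).card := by
      rw [hB, Finset.filter_filter]
      congr 1
      ext m
      simp only [Finset.mem_filter, Finset.mem_univ, true_and, not_le]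
    rw [← card_ge_val i, hr1, hb1]
    exact (Finset.card_filter_add_card_filter_not
      (p := fun m : Fin n => u m ≤ j)).symm
  have eq2 : n - jp.val = rankM u jp im + B := by
    have hcard : (Finset.univ.filter fun m : Fin n => jp ≤ u m).card = n - jp.val :=
      card_perm_ge u jp
    have hr : rankM u jp im =
        ((Finset.univ.filter fun m : Fin n => jp ≤ u m).filter fun m : Fin n => m < i).card := by
      unfold rankM
      rw [Finset.filter_filter]
      congr 1
      ext m
      simp only [Finset.mem_filter, Finset.mem_univ, true_and]
      rw [Fin.le_def, Fin.lt_def]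
      constructor
      · rintro ⟨h1, h2⟩
        exact ⟨h2, by omega⟩
      · rintro ⟨h1, h2⟩
        exact ⟨by omega, h1⟩
    have hb : B =
        ((Finset.univ.filter fun m : Fin n => jp ≤ u m).filter fun m : Fin n => ¬ m < i).card := by
      rw [hB, Finset.filter_filter]
      congr 1
      ext m
      simp only [Finset.mem_filter, Finset.mem_univ, true_and, not_lt]
      rw [Fin.lt_def, Fin.le_def, Fin.le_def]
      constructor
      · rintro ⟨h1, h2⟩
        exact ⟨by omega, by omega⟩
      · rintro ⟨h1, h2⟩
        exact ⟨by omega, by omega⟩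
    rw [← hcard, hr, hb]
    exact (Finset.card_filter_add_card_filter_not
      (p := fun m : Fin n => m < i)).symm
  omega

lemma star_to_full (v w : Equiv.Perm (Fin n))
    (hv : ∀ x, v (v x) = x) (hw : ∀ x, w (w x) = x)
    (hstar : ∀ i j, rankMStar v i j ≤ rankMStar w i j) :
    ∀ i j, rankM v i j ≤ rankM w i j := by
  intro i j
  by_cases hji : j < i
  · have := hstar i j
    rwa [rankMStar, rankMStar, if_pos hji, if_pos hji] at this
  · push_neg at hji
    by_cases hi0 : i.val = 0
    · rw [rankM_bot v i j hi0, rankM_bot w i j hi0]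
    · by_cases hjlast : j.val = n - 1
      · rw [rankM_last v i j hjlast, rankM_last w i j hjlast]
      · have hi1 : 1 ≤ i.val := by omega
        have hj1 : j.val + 1 < n := by have := j.isLt; omega
        have him2 : i.val - 1 < n := by have := i.isLt; omega
        set jp : Fin n := ⟨j.val + 1, hj1⟩ with hjpd
        set im : Fin n := ⟨i.val - 1, him2⟩ with himd
        have idv := rankM_invol_identity v hv i j jp im hi1 rfl rfl
        have idw := rankM_invol_identity w hw i j jp im hi1 rfl rfl
        have hlt : im < jp := by
          rw [Fin.lt_def]
          show i.val - 1 < j.val + 1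
          have : i.val ≤ j.val := hji
          omega
        have hlow := hstar jp im
        rw [rankMStar, rankMStar, if_pos hlt, if_pos hlt] at hlow
        omega


end BruhatAux

/-- for involutions `v, w ∈ Sₙ`, `v ≤ w` in the Bruhat order iff
`(R_v^*)_{i,j} ≤ (R_w^*)_{i,j}` for all `i, j`. -/
theorem bruhat_on_involutions_iff_lower_rank_matrix_le
    (n : ℕ) (v w : Equiv.Perm (Fin n)) (hv : v ^ 2 = 1) (hw : w ^ 2 = 1) :
    BruhatLE v w ↔ ∀ i j : Fin n, rankMStar v i j ≤ rankMStar w i j := by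
  constructor
  · intro h i j
    have hfull := BruhatAux.bruhatLE_rank_mono v w h
    unfold rankMStar
    by_cases hji : j < i
    · rw [if_pos hji, if_pos hji]
      exact hfull i j
    · rw [if_neg hji, if_neg hji]
  · intro hstar
    have hv' : ∀ x, v (v x) = x := by
      intro x
      have : (v ^ 2) x = (1 : Equiv.Perm (Fin n)) x := by rw [hv]
      rwa [pow_two, Equiv.Perm.mul_apply, Equiv.Perm.one_apply] at this
    have hw' : ∀ x, w (w x) = x := by
      intro x
      have : (w ^ 2) x = (1 : Equiv.Perm (Fin n)) x := by rw [hw]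
      rwa [pow_two, Equiv.Perm.mul_apply, Equiv.Perm.one_apply] at this
    have hfull := BruhatAux.star_to_full v w hv' hw' hstar
    exact BruhatAux.rank_dom_bruhat _ v w rfl hfull
end

section
/- Let W be a Coxeter group with length function ℓ, and for each w ∈ W fix a reduced expression w = s_{i₁}⋯s_{i_l}. In the nil-Hecke ring (the free module over the field of rational funcions ℂ(𝔥) with basis {δ_v : v ∈ W} and multiplication fδ_v · gδ_w = f·v(g) δ_{vw}), set x_i = α_i⁻¹(δ_{s_i} − δ_{id}) and x_w = x_{i₁}⋯x_{i_l}. Then for v, w ∈ W: x_v · x_w = x_{vw} if ℓ(vw) = ℓ(v) + ℓ(w), and x_v · x_w = 0 otherwise. -/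
open CoxeterSystem

variable {B W K : Type*} [Group W] [Field K] [MulSemiringAction W K]

/-- The multiplication of the nil-Hecke ring: the free `K`-module on basis `{δ_w : w ∈ W}`
(`K` playing the role of `ℂ(𝔥)`, acted on by `W`) with `f δ_v · g δ_w = f·v(g)·δ_{vw}`. -/
noncomputable def nhMul (a b : W →₀ K) : W →₀ K :=
  a.sum fun v f => b.sum fun w g => Finsupp.single (v * w) (f * (v • g))

/-- The basis element `δ_w` of the nil-Hecke ring. -/
noncomputable def nhDelta (w : W) : W →₀ K := Finsupp.single w 1

/-- The element `x_i = α_i⁻¹ (δ_{s_i} − δ_{id})` of the nil-Hecke ring, where `α : B → K`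
records the simple roots (as elements of the field `K = ℂ(𝔥)`). -/
noncomputable def nhX {M : CoxeterMatrix B} (cs : CoxeterSystem M W) (α : B → K) (i : B) :
    W →₀ K :=
  (α i)⁻¹ • (nhDelta (cs.simple i) - nhDelta 1)

/-- `x_ω = x_{i₁} ⋯ x_{i_l}` for a word `ω = (i₁, …, i_l)`. -/
noncomputable def nhXWord {M : CoxeterMatrix B} (cs : CoxeterSystem M W) (α : B → K)
    (ω : List B) : W →₀ K :=
  (ω.map (nhX cs α)).foldr nhMul (nhDelta 1)

lemma nhMul_single_single (v w : W) (f g : K) :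
    nhMul (Finsupp.single v f) (Finsupp.single w g)
      = Finsupp.single (v * w) (f * (v • g)) := by
  unfold nhMul
  rw [Finsupp.sum_single_index (by simp), Finsupp.sum_single_index (by simp)]

lemma zero_nhMul (b : W →₀ K) : nhMul (0 : W →₀ K) b = 0 := by
  simp [nhMul]

lemma nhMul_zero (a : W →₀ K) : nhMul a (0 : W →₀ K) = 0 := by
  simp [nhMul]

lemma add_nhMul (a a' b : W →₀ K) : nhMul (a + a') b = nhMul a b + nhMul a' b := by
  unfold nhMul
  apply Finsupp.sum_add_index' (fun v => by simp)
  intro v f f'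
  rw [← Finsupp.sum_add]
  apply Finsupp.sum_congr
  intro w _
  rw [add_mul, Finsupp.single_add]

lemma nhMul_add (a b b' : W →₀ K) : nhMul a (b + b') = nhMul a b + nhMul a b' := by
  unfold nhMul
  rw [← Finsupp.sum_add]
  apply Finsupp.sum_congr
  intro v _
  apply Finsupp.sum_add_index' (fun w => by simp)
  intro w g g'
  rw [smul_add, mul_add, Finsupp.single_add]

lemma neg_nhMul (a b : W →₀ K) : nhMul (-a) b = -(nhMul a b) :=
  eq_neg_of_add_eq_zero_left (by rw [← add_nhMul, neg_add_cancel, zero_nhMul])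

lemma nhMul_neg (a b : W →₀ K) : nhMul a (-b) = -(nhMul a b) :=
  eq_neg_of_add_eq_zero_left (by rw [← nhMul_add, neg_add_cancel, nhMul_zero])

lemma sub_nhMul (a a' b : W →₀ K) : nhMul (a - a') b = nhMul a b - nhMul a' b := by
  rw [sub_eq_add_neg, add_nhMul, neg_nhMul, sub_eq_add_neg]

lemma nhMul_sub (a b b' : W →₀ K) : nhMul a (b - b') = nhMul a b - nhMul a b' := by
  rw [sub_eq_add_neg, nhMul_add, nhMul_neg, sub_eq_add_neg]

lemma nhMul_single_single_assoc (u v : W) (f g : K) (c : W →₀ K) :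
    nhMul (nhMul (Finsupp.single u f) (Finsupp.single v g)) c
      = nhMul (Finsupp.single u f) (nhMul (Finsupp.single v g) c) := by
  induction c using Finsupp.induction with
  | zero => simp [nhMul_zero]
  | single_add x h c _ _ ihc =>
    simp only [nhMul_add, ihc]
    congr 1
    simp only [nhMul_single_single, mul_assoc, mul_smul, smul_mul']

lemma nhMul_single_assoc (u : W) (f : K) (b c : W →₀ K) :
    nhMul (nhMul (Finsupp.single u f) b) c = nhMul (Finsupp.single u f) (nhMul b c) := by
  induction b using Finsupp.induction with
  | zero => simp [nhMul_zero, zero_nhMul]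
  | single_add v g b _ _ ihb =>
    simp only [nhMul_add, add_nhMul, ihb, nhMul_single_single_assoc]

lemma nhMul_assoc (a b c : W →₀ K) :
    nhMul (nhMul a b) c = nhMul a (nhMul b c) := by
  induction a using Finsupp.induction with
  | zero => simp [zero_nhMul]
  | single_add v f a _ _ ih =>
    rw [add_nhMul, add_nhMul, add_nhMul, ih, nhMul_single_assoc]

lemma one_nhMul (b : W →₀ K) : nhMul (nhDelta 1 : W →₀ K) b = b := by
  unfold nhMul nhDelta
  rw [Finsupp.sum_single_index (by simp)]
  simp [Finsupp.sum_single]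

lemma nhMul_one (a : W →₀ K) : nhMul a (nhDelta 1 : W →₀ K) = a := by
  unfold nhMul nhDelta
  have : ∀ v : W, (Finsupp.single (1 : W) (1 : K)).sum
      (fun w g => Finsupp.single (v * w) ((a v) * (v • g))) = Finsupp.single v (a v) := by
    intro v
    rw [Finsupp.sum_single_index (by simp)]
    simp
  calc a.sum (fun v f => (Finsupp.single (1 : W) (1 : K)).sum
        (fun w g => Finsupp.single (v * w) (f * (v • g))))
      = a.sum fun v f => Finsupp.single v f := by
        apply Finsupp.sum_congr
        intro v _
        rw [Finsupp.sum_single_index (by simp)]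
        simp
    _ = a := Finsupp.sum_single a

variable {M : CoxeterMatrix B} (cs : CoxeterSystem M W)

lemma nhXWord_nil (α : B → K) : nhXWord cs α [] = nhDelta 1 := rfl

lemma nhXWord_cons (α : B → K) (i : B) (ω : List B) :
    nhXWord cs α (i :: ω) = nhMul (nhX cs α i) (nhXWord cs α ω) := rfl

lemma nhXWord_singleton (α : B → K) (i : B) : nhXWord cs α [i] = nhX cs α i := by
  rw [nhXWord_cons, nhXWord_nil, nhMul_one]

lemma nhXWord_append (α : B → K) (ω₁ ω₂ : List B) :
    nhXWord cs α (ω₁ ++ ω₂) = nhMul (nhXWord cs α ω₁) (nhXWord cs α ω₂) := by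
  induction ω₁ with
  | nil => rw [List.nil_append, nhXWord_nil, one_nhMul]
  | cons i ω ih =>
    rw [List.cons_append, nhXWord_cons, nhXWord_cons, ih, nhMul_assoc]

lemma nhX_sq (α : B → K) (i : B) (h : cs.simple i • α i = -α i) :
    nhMul (nhX cs α i) (nhX cs α i) = 0 := by
  set c := (α i)⁻¹ with hc
  have hXi : nhX cs α i = Finsupp.single (cs.simple i) c - Finsupp.single 1 c := by
    simp [nhX, nhDelta, Finsupp.smul_single, smul_sub, hc]
  have hsinv : cs.simple i • c = -c := by
    rw [hc, smul_inv'', h, inv_neg]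
  rw [hXi, sub_nhMul, nhMul_sub, nhMul_sub, nhMul_single_single, nhMul_single_single,
    nhMul_single_single, nhMul_single_single, hsinv, cs.simple_mul_simple_self,
    one_mul, mul_one, one_smul]
  simp only [mul_neg, Finsupp.single_neg, one_mul, mul_one]
  abel

lemma nhX_key (α : B → K) (hs : ∀ i : B, cs.simple i • α i = - α i)
    (hX : ∀ ω ω' : List B, cs.IsReduced ω → cs.IsReduced ω' →
      cs.wordProd ω = cs.wordProd ω' → nhXWord cs α ω = nhXWord cs α ω') :
    ∀ ω₂ ω₁ : List B, cs.IsReduced ω₁ → cs.IsReduced ω₂ →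
      cs.length (cs.wordProd ω₁ * cs.wordProd ω₂)
        ≠ cs.length (cs.wordProd ω₁) + cs.length (cs.wordProd ω₂) →
      nhMul (nhXWord cs α ω₁) (nhXWord cs α ω₂) = 0 := by
  intro ω₂
  induction ω₂ with
  | nil => intro ω₁ _ _ hne; exact absurd (by simp) hne
  | cons i ω₂' ih =>
    intro ω₁ h₁ h₂ hne
    have h₂' : cs.IsReduced ω₂' := by
      have := h₂.drop 1
      simpa using this
    have hlv : cs.length (cs.wordProd ω₁) = ω₁.length := h₁
    have hlw : cs.length (cs.wordProd (i :: ω₂')) = ω₂'.length + 1 := by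
      have := h₂; unfold CoxeterSystem.IsReduced at this; simpa using this
    have hlw' : cs.length (cs.wordProd ω₂') = ω₂'.length := h₂'
    rcases cs.length_mul_simple (cs.wordProd ω₁) i with hup | hdown
    · -- ℓ(v s_i) = ℓ v + 1 : use induction hypothesis with ω₁ ++ [i]
      have hred : cs.IsReduced (ω₁ ++ [i]) := by
        unfold CoxeterSystem.IsReduced
        rw [cs.wordProd_append, cs.wordProd_singleton]
        simp [hup, hlv]
      have hprod : cs.wordProd (ω₁ ++ [i]) = cs.wordProd ω₁ * cs.simple i := by
        rw [cs.wordProd_append, cs.wordProd_singleton]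
      have key := ih (ω₁ ++ [i]) hred h₂' ?_
      · rw [nhXWord_append, nhXWord_singleton] at key
        rw [nhXWord_cons, ← nhMul_assoc, nhMul_assoc (nhXWord cs α ω₁) (nhX cs α i)
          (nhXWord cs α ω₂')] at *
        rw [← nhMul_assoc] at key
        rw [← nhMul_assoc]
        exact key
      · rw [hprod, hup, hlw']
        intro hcon
        apply hne
        rw [cs.wordProd_cons, ← mul_assoc] at *
        rw [hcon, hlw]
        omega
    · -- ℓ(v s_i) = ℓ v - 1 : v has a reduced word ending in i, use x_i² = 0
      obtain ⟨ω, hωred, hωprod⟩ := cs.exists_reduced_word' (cs.wordProd ω₁ * cs.simple i)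
      have hred : cs.IsReduced (ω ++ [i]) := by
        unfold CoxeterSystem.IsReduced
        rw [cs.wordProd_append, cs.wordProd_singleton, ← hωprod, mul_assoc,
          cs.simple_mul_simple_self, mul_one]
        have : ω.length = cs.length (cs.wordProd ω₁ * cs.simple i) := by
          rw [hωprod]; exact hωred.symm
        simp [hlv, ← this]
        omega
      have hprod : cs.wordProd (ω ++ [i]) = cs.wordProd ω₁ := by
        rw [cs.wordProd_append, cs.wordProd_singleton, ← hωprod, mul_assoc,
          cs.simple_mul_simple_self, mul_one]
      have heq : nhXWord cs α ω₁ = nhXWord cs α (ω ++ [i]) :=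
        hX ω₁ (ω ++ [i]) h₁ hred hprod.symm
      rw [heq, nhXWord_append, nhXWord_singleton, nhXWord_cons, nhMul_assoc,
        ← nhMul_assoc (nhX cs α i) (nhX cs α i), nhX_sq cs α i (hs i), zero_nhMul,
        nhMul_zero]

/-- in the nil-Hecke ring, with `x_w` defined via any reduced expression of `w`
(independence of the reduced expression, a theorem of Kostant–Kumar, is hypothesis `hX`),
one has `x_v · x_w = x_{vw}` if `ℓ(vw) = ℓ(v) + ℓ(w)`, and `x_v · x_w = 0` otherwise. -/
theorem nhX_mul_nhX {M : CoxeterMatrix B} (cs : CoxeterSystem M W)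
    (α : B → K) (hα : ∀ i, α i ≠ 0)
    (hs : ∀ i : B, cs.simple i • α i = - α i)
    (hX : ∀ ω ω' : List B, cs.IsReduced ω → cs.IsReduced ω' →
      cs.wordProd ω = cs.wordProd ω' → nhXWord cs α ω = nhXWord cs α ω')
    (v w : W) (ω₁ ω₂ : List B)
    (h₁ : cs.IsReduced ω₁) (hp₁ : cs.wordProd ω₁ = v)
    (h₂ : cs.IsReduced ω₂) (hp₂ : cs.wordProd ω₂ = w) :
    (cs.length (v * w) = cs.length v + cs.length w →
      ∀ ω₃ : List B, cs.IsReduced ω₃ → cs.wordProd ω₃ = v * w →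
        nhMul (nhXWord cs α ω₁) (nhXWord cs α ω₂) = nhXWord cs α ω₃) ∧
    (cs.length (v * w) ≠ cs.length v + cs.length w →
      nhMul (nhXWord cs α ω₁) (nhXWord cs α ω₂) = 0) := by
  constructor
  · intro hlen ω₃ h₃ hp₃
    have hprod : cs.wordProd (ω₁ ++ ω₂) = v * w := by
      rw [cs.wordProd_append, hp₁, hp₂]
    have hred : cs.IsReduced (ω₁ ++ ω₂) := by
      unfold CoxeterSystem.IsReduced
      rw [hprod, hlen, List.length_append]
      have e₁ : cs.length v = ω₁.length := by rw [← hp₁]; exact h₁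
      have e₂ : cs.length w = ω₂.length := by rw [← hp₂]; exact h₂
      omega
    rw [← nhXWord_append]
    exact hX (ω₁ ++ ω₂) ω₃ hred h₃ (by rw [hprod, hp₃])
  · intro hne
    exact nhX_key cs α hs hX ω₂ ω₁ h₁ h₂ (by rw [hp₁, hp₂]; exact hne)
end

section
/- Let W be a Weyl group acting on ℂ(𝔥) and define c_w = c_{w,id} = (−1)^{ℓ(w)} Σ (s_{i₁}^{ε₁}α_{i₁})⁻¹ (s_{i₁}^{ε₁}s_{i₂}^{ε₂}α_{i₂})⁻¹ ⋯ (s_{i₁}^{ε₁}⋯s_{i_l}^{ε_l}α_{i_l})⁻¹, the sum over all ε ∈ {0,1}^l with s_{i₁}^{ε₁}⋯s_{i_l}^{ε_l} = id, where s_{i₁}⋯s_{i_l} is a reduced expression of w. Then c_w = c_{w⁻¹}. -/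
open CoxeterSystem
open scoped Classical

variable {B W K : Type*} [Group W] [Field K] [MulSemiringAction W K]

/-- For a word `ω` and a mask `ε ∈ {0,1}^|ω|`, the product `s_{i₁}^{ε₁} ⋯ s_{i_k}^{ε_k}`
of the first `k` masked letters. -/
def maskProdTake {M : CoxeterMatrix B} (cs : CoxeterSystem M W)
    (ω : List B) (ε : Fin ω.length → Bool) (k : ℕ) : W :=
  (((List.finRange ω.length).take k).map
    fun m => if ε m then cs.simple (ω.get m) else 1).prod

/-- The Kostant–Kumar sum
`c_ω = (−1)^l Σ_ε Π_k (s_{i₁}^{ε₁} ⋯ s_{i_k}^{ε_k} α_{i_k})⁻¹`, the sum over masks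
`ε ∈ {0,1}^l` with `s_{i₁}^{ε₁} ⋯ s_{i_l}^{ε_l} = id`, for a word `ω = (i₁, …, i_l)`;
for a reduced word of `w` this is the coefficient `c_w = c_{w,id}`.  Here `α : B → K`
gives the simple roots in the `W`-field `K = ℂ(𝔥)`. -/
noncomputable def cSum {M : CoxeterMatrix B} (cs : CoxeterSystem M W) (α : B → K)
    (ω : List B) : K :=
  (-1 : K) ^ ω.length *
    ∑ ε : Fin ω.length → Bool,
      if maskProdTake cs ω ε ω.length = 1 then
        ∏ k : Fin ω.length, (maskProdTake cs ω ε (k.1 + 1) • α (ω.get k))⁻¹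
      else 0

set_option linter.unusedSectionVars false

lemma maskProdTake_full {M : CoxeterMatrix B} (cs : CoxeterSystem M W)
    (ω : List B) (ε : Fin ω.length → Bool) :
    maskProdTake cs ω ε ω.length =
      ((List.finRange ω.length).map
        fun m => if ε m then cs.simple (ω.get m) else 1).prod := by
  unfold maskProdTake
  rw [List.take_of_length_le (by simp)]

lemma maskProdTake_split {M : CoxeterMatrix B} (cs : CoxeterSystem M W)
    (ω : List B) (ε : Fin ω.length → Bool) (k : ℕ) :
    maskProdTake cs ω ε ω.length =
      maskProdTake cs ω ε k *
        (((List.finRange ω.length).drop k).map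
          fun m => if ε m then cs.simple (ω.get m) else 1).prod := by
  rw [maskProdTake_full]
  unfold maskProdTake
  rw [← List.prod_append, ← List.map_append, List.take_append_drop]

lemma maskProdTake_succ {M : CoxeterMatrix B} (cs : CoxeterSystem M W)
    (ω : List B) (ε : Fin ω.length → Bool) (k : Fin ω.length) :
    maskProdTake cs ω ε (k.1 + 1) =
      maskProdTake cs ω ε k.1 * (if ε k then cs.simple (ω.get k) else 1) := by
  unfold maskProdTake
  rw [List.take_succ]
  simp [List.getElem?_eq_getElem, k.2]

lemma get_reverse' (ω : List B) (m : Fin ω.reverse.length) :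
    ω.reverse.get m = ω.get (Fin.rev (Fin.cast ω.length_reverse m)) := by
  rw [List.get_eq_getElem, List.get_eq_getElem, List.getElem_reverse]
  congr 1
  simp [Fin.val_rev]
  omega

lemma finRange_map_rev_cast (ω : List B) :
    ((List.finRange ω.reverse.length).map
        fun m => Fin.rev (Fin.cast ω.length_reverse m))
      = (List.finRange ω.length).reverse := by
  have h1 : (List.finRange ω.reverse.length).map (Fin.cast ω.length_reverse)
      = List.finRange ω.length := by
    apply List.ext_getElem
    · simp
    · intro i h1 h2
      simp
  calc ((List.finRange ω.reverse.length).map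
        fun m => Fin.rev (Fin.cast ω.length_reverse m))
      = ((List.finRange ω.reverse.length).map (Fin.cast ω.length_reverse)).map
          Fin.rev := by rw [List.map_map]; rfl
    _ = (List.finRange ω.length).map Fin.rev := by rw [h1]
    _ = (List.finRange ω.length).reverse := List.finRange_reverse.symm

lemma maskProdTake_reverse {M : CoxeterMatrix B} (cs : CoxeterSystem M W)
    (ω : List B) (ε : Fin ω.length → Bool) (k : ℕ) :
    maskProdTake cs ω.reverse
        (fun m => ε (Fin.rev (Fin.cast ω.length_reverse m))) k
      = (maskProdTake cs ω ε ω.length)⁻¹ * maskProdTake cs ω ε (ω.length - k) := by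
  have hfun : (fun m : Fin ω.reverse.length =>
      if ε (Fin.rev (Fin.cast ω.length_reverse m)) then cs.simple (ω.reverse.get m) else 1)
      = (fun m : Fin ω.length => if ε m then cs.simple (ω.get m) else 1) ∘
          (fun m => Fin.rev (Fin.cast ω.length_reverse m)) := by
    funext m
    simp only [Function.comp_apply, get_reverse']
  unfold maskProdTake
  rw [hfun, ← List.map_map, List.map_take, finRange_map_rev_cast,
    List.take_reverse, List.length_finRange, List.map_reverse,
    List.prod_reverse_noncomm, List.map_map]
  have hfix : ((fun x => x⁻¹) ∘ fun m : Fin ω.length =>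
      if ε m then cs.simple (ω.get m) else 1)
      = fun m => if ε m then cs.simple (ω.get m) else 1 := by
    funext m
    by_cases h : ε m <;> simp [h, cs.inv_simple]
  rw [hfix]
  have := maskProdTake_split cs ω ε (ω.length - k)
  unfold maskProdTake at this
  rw [eq_comm, ← eq_inv_mul_iff_mul_eq] at this
  rw [this, mul_inv_rev, inv_inv]

lemma toAdd_list_prod {A : Type*} [AddMonoid A] (L : List (Multiplicative A)) :
    Multiplicative.toAdd L.prod = (L.map Multiplicative.toAdd).sum := by
  induction L with
  | nil => simp
  | cons a t ih => simp [ih]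

lemma signProd_eq_one {M : CoxeterMatrix B} (cs : CoxeterSystem M W)
    (ω : List B) (ε : Fin ω.length → Bool)
    (h1 : maskProdTake cs ω ε ω.length = 1) :
    ∏ k : Fin ω.length, (if ε k then (-1 : K) else 1) = 1 := by
  set N : ℕ := ∑ k : Fin ω.length, (if ε k then 1 else 0) with hN
  have hz : ((N : ZMod 2)) = 0 := by
    have h2 := congrArg cs.lengthParity h1
    rw [maskProdTake_full, map_list_prod, map_one, List.map_map] at h2
    have h3 : cs.lengthParity ∘
        (fun m : Fin ω.length => if ε m then cs.simple (ω.get m) else 1)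
        = fun m => Multiplicative.ofAdd (if ε m then (1 : ZMod 2) else 0) := by
      funext m
      by_cases h : ε m <;> simp [h, cs.lengthParity_simple]
    rw [h3] at h2
    have h4 := congrArg Multiplicative.toAdd h2
    rw [toAdd_list_prod, List.map_map, toAdd_one] at h4
    have h5 : (Multiplicative.toAdd ∘ fun m : Fin ω.length =>
        Multiplicative.ofAdd (if ε m then (1 : ZMod 2) else 0))
        = fun m => (if ε m then (1 : ZMod 2) else 0) := by
      funext m; simp
    rw [h5] at h4
    rw [hN]
    push_cast
    rw [Fin.sum_univ_def]
    exact h4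
  have hdvd : 2 ∣ N := (ZMod.natCast_eq_zero_iff N 2).mp hz
  have heven : Even N := by
    obtain ⟨c, hc⟩ := hdvd; exact ⟨c, by omega⟩
  calc ∏ k : Fin ω.length, (if ε k then (-1 : K) else 1)
      = ∏ k : Fin ω.length, (-1 : K) ^ (if ε k then 1 else 0) := by
        apply Finset.prod_congr rfl
        intro k _
        by_cases h : ε k <;> simp [h]
    _ = (-1 : K) ^ N := by rw [Finset.prod_pow_eq_pow_sum]
    _ = 1 := heven.neg_one_pow

lemma cSum_reverse {M : CoxeterMatrix B} (cs : CoxeterSystem M W) (α : B → K)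
    (hs : ∀ i : B, cs.simple i • α i = - α i) (ω : List B) :
    cSum cs α ω = cSum cs α ω.reverse := by
  have hlen : ω.reverse.length = ω.length := ω.length_reverse
  set σ : Fin ω.reverse.length ≃ Fin ω.length :=
    (finCongr hlen).trans Fin.revPerm with hσ
  have hσval : ∀ m : Fin ω.reverse.length, σ m = Fin.rev (Fin.cast hlen m) := fun m => rfl
  unfold cSum
  congr 1
  · rw [hlen]
  apply Fintype.sum_equiv (Equiv.arrowCongr σ.symm (Equiv.refl Bool))
  intro ε
  have he : (Equiv.arrowCongr σ.symm (Equiv.refl Bool)) ε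
      = fun m => ε (Fin.rev (Fin.cast hlen m)) := rfl
  rw [he]
  set ε' : Fin ω.reverse.length → Bool := fun m => ε (Fin.rev (Fin.cast hlen m)) with hε'
  have hcond : maskProdTake cs ω.reverse ε' ω.reverse.length
      = (maskProdTake cs ω ε ω.length)⁻¹ := by
    rw [maskProdTake_reverse cs ω ε ω.reverse.length, hlen, Nat.sub_self]
    simp [maskProdTake]
  by_cases hP : maskProdTake cs ω ε ω.length = 1
  · rw [if_pos hP, if_pos (by rw [hcond, hP, inv_one])]
    have hterm : ∀ k : Fin ω.reverse.length,
        maskProdTake cs ω.reverse ε' (k.1 + 1) = maskProdTake cs ω ε ((σ k : Fin ω.length) : ℕ) := by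
      intro k
      rw [maskProdTake_reverse cs ω ε (k.1 + 1), hP, inv_one, one_mul]
      congr 1
    have hget : ∀ k : Fin ω.reverse.length, ω.reverse.get k = ω.get (σ k) := by
      intro k
      rw [get_reverse', hσval]
    have hstep : ∀ j : Fin ω.length,
        maskProdTake cs ω ε (j.1 + 1) • α (ω.get j)
          = (if ε j then (-1 : K) else 1) * (maskProdTake cs ω ε j.1 • α (ω.get j)) := by
      intro j
      rw [maskProdTake_succ, mul_smul]
      by_cases h : ε j
      · rw [if_pos h, if_pos h, hs (ω.get j), smul_neg, neg_one_mul]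
      · rw [if_neg h, if_neg h, one_smul, one_mul]
    calc ∏ j : Fin ω.length, (maskProdTake cs ω ε (j.1 + 1) • α (ω.get j))⁻¹
        = ∏ j : Fin ω.length, ((if ε j then (-1 : K) else 1) *
            (maskProdTake cs ω ε j.1 • α (ω.get j))⁻¹) := by
          apply Finset.prod_congr rfl
          intro j _
          rw [hstep j, mul_inv]
          congr 1
          by_cases h : ε j <;> simp [h, inv_neg]
      _ = (∏ j : Fin ω.length, (if ε j then (-1 : K) else 1)) *
            ∏ j : Fin ω.length, (maskProdTake cs ω ε j.1 • α (ω.get j))⁻¹ :=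
          Finset.prod_mul_distrib
      _ = ∏ j : Fin ω.length, (maskProdTake cs ω ε j.1 • α (ω.get j))⁻¹ := by
          rw [signProd_eq_one cs ω ε hP, one_mul]
      _ = ∏ k : Fin ω.reverse.length,
            (maskProdTake cs ω ε ((σ k : Fin ω.length) : ℕ) • α (ω.get (σ k)))⁻¹ :=
          (Equiv.prod_comp σ
            (fun j : Fin ω.length => (maskProdTake cs ω ε j.1 • α (ω.get j))⁻¹)).symm
      _ = ∏ k : Fin ω.reverse.length,
            (maskProdTake cs ω.reverse ε' (k.1 + 1) • α (ω.reverse.get k))⁻¹ := by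
          apply Finset.prod_congr rfl
          intro k _
          rw [hterm k, hget k]
  · rw [if_neg hP, if_neg (by rw [hcond]; simpa using hP)]

/-- `c_w = c_{w⁻¹}`.  Independence of `c_w` from the chosen reduced
expression (a fact recorded in the statement) is hypothesis `hc`. -/
theorem cSum_inv {M : CoxeterMatrix B} (cs : CoxeterSystem M W)
    (α : B → K) (hα : ∀ i, α i ≠ 0)
    (hs : ∀ i : B, cs.simple i • α i = - α i)
    (hc : ∀ ω ω' : List B, cs.IsReduced ω → cs.IsReduced ω' →
      cs.wordProd ω = cs.wordProd ω' → cSum cs α ω = cSum cs α ω')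
    (w : W) (ω ω' : List B)
    (hω : cs.IsReduced ω) (hωp : cs.wordProd ω = w)
    (hω' : cs.IsReduced ω') (hω'p : cs.wordProd ω' = w⁻¹) :
    cSum cs α ω = cSum cs α ω' := by
  have h1 : cs.IsReduced ω.reverse := (cs.isReduced_reverse_iff ω).mpr hω
  have h2 : cs.wordProd ω.reverse = cs.wordProd ω' := by
    rw [cs.wordProd_reverse, hωp, hω'p]
  calc cSum cs α ω = cSum cs α ω.reverse := cSum_reverse cs α hs ω
    _ = cSum cs α ω' := hc _ _ h1 hω' h2
end
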